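/- arXiv:1707.03129 — 5 statements merged into one kernel-verified Lean document; each statement's English description precedes it below -/
import Mathlib

section
/- Let (M,d) be a complete metric space and v ∈ AC^p(a,b;M) for 1 ≤ p ≤ ∞. Then for almost every t ∈ (a,b) the metric derivative |v'|(t) := lim_{s→t} d(v(s),v(t))/|s−t| exists, the function |v'| belongs to L^p(a,b) and satisfies d(v(s),v(t)) ≤ ∫ₛᵗ |v'|(r) dr for all a < s ≤ t < b, and for any other m ∈ L^p(a,b) satisfying this inequality one has |v'|(t) ≤ m(t) for a.e. t ∈ (a,b). -/
open MeasureTheory Set Filter Topology Metric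
open scoped ENNReal

noncomputable section

/-- The positive part of an extended real number, as an element of `ℝ≥0∞`. -/
def ErealPos (x : EReal) : ℝ≥0∞ := if x = ⊤ then ⊤ else ENNReal.ofReal x.toReal

/-- `md` is (a.e. on `S`) the metric derivative of the curve `v`. -/
def IsMetricDerivOn {X : Type*} [PseudoMetricSpace X] (v : ℝ → X) (S : Set ℝ)
    (md : ℝ → ℝ) : Prop :=
  ∀ᵐ t ∂(volume.restrict S),
    Tendsto (fun s => dist (v s) (v t) / |s - t|) (nhdsWithin t (S \ {t})) (nhds (md t))

/-- `g` is a strong upper gradient of `E` : along every absolutely continuous curve `w`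
with metric derivative `mw`, `g ∘ w` is measurable and
`|E (w t) - E (w s)| ≤ ∫ₛᵗ g(w r) mw r dr`. -/
def StrongUpperGradient {X : Type*} [PseudoMetricSpace X] (E : X → EReal)
    (g : X → ℝ≥0∞) : Prop :=
  ∀ (a b : ℝ) (w : ℝ → X) (mw : ℝ → ℝ),
    IntegrableOn mw (Ioo a b) →
    (∀ x ∈ Ioo a b, 0 ≤ mw x) →
    IsMetricDerivOn w (Ioo a b) mw →
    (∀ s t : ℝ, a < s → s ≤ t → t < b → dist (w s) (w t) ≤ ∫ r in s..t, mw r) →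
    Measurable (fun t => g (w t)) ∧
      ∀ s t : ℝ, a < s → s ≤ t → t < b →
        max (E (w t) - E (w s)) (E (w s) - E (w t)) ≤
          ((∫⁻ r in Ioc s t, g (w r) * ENNReal.ofReal (mw r)) : EReal)

/-- The time interval `(0, T)` for `T ∈ (0, +∞]`. -/
def ITo (T : EReal) : Set ℝ := {x : ℝ | 0 < x ∧ (x : EReal) < T}

/-- `v` is a `p`-gradient flow (`p`-curve of maximal slope) of `E` with respect to the
strong upper gradient `g` on `(0,T)`, with metric derivative `md`:  `v` is locally
absolutely continuous on `(0,T)`, `E ∘ v` is finite and non-increasing there, and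
`d/dt E(v t) ≤ -(1/p') g^{p'}(v t) - (1/p) |v'|^p(t)` for a.e. `t ∈ (0,T)`. -/
def IsPGradientFlow {X : Type*} [PseudoMetricSpace X] (E : X → EReal) (g : X → ℝ≥0∞)
    (p : ℝ) (T : EReal) (v : ℝ → X) (md : ℝ → ℝ) : Prop :=
  (∀ x ∈ ITo T, 0 ≤ md x) ∧
  (∀ c d : ℝ, 0 < c → c ≤ d → (d : EReal) < T → IntegrableOn md (Ioc c d)) ∧
  (∀ s t : ℝ, 0 < s → s ≤ t → (t : EReal) < T → dist (v s) (v t) ≤ ∫ r in s..t, md r) ∧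
  IsMetricDerivOn v (ITo T) md ∧
  (∀ t ∈ ITo T, E (v t) ≠ ⊤ ∧ E (v t) ≠ ⊥) ∧
  AntitoneOn (fun t => (E (v t)).toReal) (ITo T) ∧
  ∀ᵐ t ∂(volume.restrict (ITo T)), ∃ D : ℝ,
    HasDerivAt (fun s => (E (v s)).toReal) D t ∧ D ≤ 0 ∧
    g (v t) ^ (p / (p - 1)) / ENNReal.ofReal (p / (p - 1)) +
        ENNReal.ofReal (md t ^ p / p) ≤ ENNReal.ofReal (-D)

/-- `f` is absolutely continuous on the interval `[c,d]`. -/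
def AbsCont (f : ℝ → ℝ) (c d : ℝ) : Prop :=
  ∀ ε > (0:ℝ), ∃ δ > (0:ℝ), ∀ n : ℕ, ∀ x y : Fin n → ℝ,
    (∀ i, c ≤ x i ∧ x i ≤ y i ∧ y i ≤ d) →
    (Pairwise fun i j => Disjoint (Ioo (x i) (y i)) (Ioo (x j) (y j))) →
    (∑ i, (y i - x i)) < δ → (∑ i, |f (y i) - f (x i)|) < ε

/-- `X` is a length space: every two points are joined by a constant speed geodesic. -/
def IsLengthSpace (X : Type*) [PseudoMetricSpace X] : Prop :=
  ∀ u w : X, ∃ γ : ℝ → X, γ 0 = u ∧ γ 1 = w ∧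
    ∀ s t : ℝ, 0 ≤ s → s ≤ t → t ≤ 1 → dist (γ s) (γ t) = (t - s) * dist u w

/-- `E` is `lam`-geodesically convex. -/
def GeodesicConvexWith {X : Type*} [PseudoMetricSpace X] (E : X → EReal) (lam : ℝ) : Prop :=
  ∀ u w : X, E u ≠ ⊤ → E w ≠ ⊤ → ∃ γ : ℝ → X, γ 0 = u ∧ γ 1 = w ∧
    (∀ s t : ℝ, 0 ≤ s → s ≤ t → t ≤ 1 → dist (γ s) (γ t) = (t - s) * dist u w) ∧
    ∀ t : ℝ, 0 ≤ t → t ≤ 1 →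
      E (γ t) ≤ ((1 - t : ℝ) : EReal) * E u + ((t : ℝ) : EReal) * E w -
        ((lam / 2 * (t * (1 - t)) * dist u w ^ 2 : ℝ) : EReal)

/-- The descending slope `|D⁻E|(u) = limsup_{w → u} (E u - E w)⁺ / d(u,w)`. -/
def descSlope {X : Type*} [PseudoMetricSpace X] (E : X → EReal) (u : X) : ℝ≥0∞ :=
  Filter.limsup (fun w => ErealPos (E u - E w) / ENNReal.ofReal (dist u w))
    (nhdsWithin u {u}ᶜ)


lemma ae_leb (g : ℝ → ℝ) (hg : Integrable g) :
    ∀ᵐ x : ℝ, Tendsto (fun y => ⨍ r in Icc x y, |g r - g x|) (𝓝[>] x) (𝓝 0)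
      ∧ Tendsto (fun y => ⨍ r in Icc y x, |g r - g x|) (𝓝[<] x) (𝓝 0) := by
  filter_upwards [(IsUnifLocDoublingMeasure.vitaliFamily (volume : Measure ℝ) 1).ae_tendsto_average_norm_sub hg.locallyIntegrable] with x hx
  constructor
  · have := hx.comp (Real.tendsto_Icc_vitaliFamily_right x)
    simpa [Real.norm_eq_abs, Function.comp_def] using this
  · have := hx.comp (Real.tendsto_Icc_vitaliFamily_left x)
    simpa [Real.norm_eq_abs, Function.comp_def] using this


lemma avg_eq (h : ℝ → ℝ) {x y : ℝ} (hxy : x < y) :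
    (⨍ r in Icc x y, h r) = (y - x)⁻¹ * ∫ r in Ioc x y, h r := by
  rw [setAverage_eq, integral_Icc_eq_integral_Ioc, Real.volume_real_Icc_of_le hxy.le, smul_eq_mul]

lemma quot_sub_le {g : ℝ → ℝ} {x y : ℝ} (c : ℝ) (hxy : x < y) (hi : IntegrableOn g (Ioc x y)) :
    |(y - x)⁻¹ * (∫ r in x..y, g r) - c| ≤ ⨍ r in Icc x y, |g r - c| := by
  rw [avg_eq _ hxy]
  have hyx : (0:ℝ) < y - x := by linarith
  have h2 : (y - x)⁻¹ * (∫ r in x..y, g r) - c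
      = (y - x)⁻¹ * ∫ r in Ioc x y, (g r - c) := by
    rw [integral_sub hi (integrable_const _), intervalIntegral.integral_of_le hxy.le]
    simp only [integral_const, measureReal_def, Measure.restrict_apply, MeasurableSet.univ, univ_inter,
      Real.volume_Ioc, smul_eq_mul, ENNReal.toReal_ofReal hyx.le]
    field_simp
  rw [h2, abs_mul, abs_of_nonneg (inv_nonneg.2 hyx.le)]
  gcongr
  calc |∫ r in Ioc x y, (g r - c)| ≤ ∫ r in Ioc x y, ‖g r - c‖ := by
        rw [← Real.norm_eq_abs]; exact norm_integral_le_integral_norm _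
    _ = ∫ r in Ioc x y, |g r - c| := by simp [Real.norm_eq_abs]

lemma tendsto_quot_right (g : ℝ → ℝ) (hg : Integrable g) (x : ℝ)
    (hx : Tendsto (fun y => ⨍ r in Icc x y, |g r - g x|) (𝓝[>] x) (𝓝 0)) :
    Tendsto (fun y => (y - x)⁻¹ * ((∫ r in x..y, g r))) (𝓝[>] x) (𝓝 (g x)) := by
  rw [tendsto_iff_dist_tendsto_zero]
  apply squeeze_zero' (by filter_upwards with y using dist_nonneg)
    (g := fun y => ⨍ r in Icc x y, |g r - g x|) _ hx
  filter_upwards [self_mem_nhdsWithin] with y (hy : x < y)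
  rw [Real.dist_eq]
  exact quot_sub_le _ hy hg.integrableOn

lemma ae_hasDeriv_primitive (g : ℝ → ℝ) (hg : Integrable g) :
    ∀ᵐ x : ℝ, HasDerivAt (fun y => ∫ r in (0:ℝ)..y, g r) (g x) x := by
  filter_upwards [ae_leb g hg] with x hx
  obtain ⟨hr, hl⟩ := hx
  rw [hasDerivAt_iff_tendsto_slope, ← nhdsLT_sup_nhdsGT x, tendsto_sup]
  have hint : ∀ u v : ℝ, (∫ r in (0:ℝ)..v, g r) - ∫ r in (0:ℝ)..u, g r = ∫ r in u..v, g r := by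
    intro u v
    exact intervalIntegral.integral_interval_sub_left hg.intervalIntegrable hg.intervalIntegrable
  constructor
  · apply Tendsto.congr' (f₁ := fun y => (x - y)⁻¹ * ∫ r in y..x, g r)
    · filter_upwards [self_mem_nhdsWithin] with y (hy : y < x)
      rw [slope_def_field, div_eq_inv_mul]
      rw [show (∫ r in (0:ℝ)..y, g r) - ∫ r in (0:ℝ)..x, g r = -∫ r in y..x, g r by
        rw [← hint y x]; ring]
      have h1 : y - x ≠ 0 := by intro h; linarith [sub_eq_zero.mp h]
      have h2 : x - y ≠ 0 := by intro h; linarith [sub_eq_zero.mp h]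
      field_simp
      ring
    · rw [tendsto_iff_dist_tendsto_zero]
      apply squeeze_zero' (by filter_upwards with y using dist_nonneg)
        (g := fun y => ⨍ r in Icc y x, |g r - g x|) _ hl
      filter_upwards [self_mem_nhdsWithin] with y (hy : y < x)
      rw [Real.dist_eq]
      exact quot_sub_le _ hy hg.integrableOn
  · apply Tendsto.congr' (f₁ := fun y => (y - x)⁻¹ * ∫ r in x..y, g r)
    · filter_upwards [self_mem_nhdsWithin] with y (hy : x < y)
      rw [slope_def_field, div_eq_inv_mul, hint x y]
    · exact tendsto_quot_right g hg x hr


section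
variable {c d : ℝ} {g f : ℝ → ℝ}

lemma primitive_sub (g' : ℝ → ℝ) (hg' : Integrable g') (u v : ℝ) :
    (∫ r in (0:ℝ)..v, g' r) - ∫ r in (0:ℝ)..u, g' r = ∫ r in u..v, g' r :=
  intervalIntegral.integral_interval_sub_left hg'.intervalIntegrable hg'.intervalIntegrable

lemma indicator_interval_eq (hgi : IntegrableOn g (Ioc c d)) {x y : ℝ}
    (hx : c ≤ x) (hxy : x ≤ y) (hy : y ≤ d) :
    (∫ r in x..y, (Ioc c d).indicator g r) = ∫ r in x..y, g r := by
  rw [intervalIntegral.integral_of_le hxy, intervalIntegral.integral_of_le hxy,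
    setIntegral_indicator measurableSet_Ioc,
    inter_eq_left.mpr (Ioc_subset_Ioc hx hy)]

lemma diff_bound (hcd : c < d) (hgi : IntegrableOn g (Ioc c d))
    (hf : ∀ x y : ℝ, c ≤ x → x ≤ y → y ≤ d → |f y - f x| ≤ ∫ r in x..y, g r) :
    ∀ᵐ t ∂volume, t ∈ Ioo c d → DifferentiableAt ℝ f t ∧ |deriv f t| ≤ g t := by
  set g' : ℝ → ℝ := (Ioc c d).indicator g with hg'def
  have hg' : Integrable g' := (integrable_indicator_iff measurableSet_Ioc).2 hgi
  set G : ℝ → ℝ := fun u => ∫ r in (0:ℝ)..u, g' r with hGdef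
  have hΔG : ∀ u v : ℝ, G v - G u = ∫ r in u..v, g' r := fun u v =>
    primitive_sub g' hg' u v
  have hfG : ∀ x y : ℝ, c ≤ x → x ≤ y → y ≤ d → |f y - f x| ≤ G y - G x := by
    intro x y hx hxy hy
    rw [hΔG, indicator_interval_eq hgi hx hxy hy]
    exact hf x y hx hxy hy
  have hmono : MonotoneOn (fun u => G u + f u) (Icc c d) ∧
      MonotoneOn (fun u => G u - f u) (Icc c d) := by
    constructor <;>
    · intro u hu v hv huv
      have := hfG u v hu.1 huv hv.2
      have := abs_le.mp this
      simp only
      linarith [this.1, this.2]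
  filter_upwards [hmono.1.ae_differentiableWithinAt_of_mem,
    hmono.2.ae_differentiableWithinAt_of_mem,
    ae_hasDeriv_primitive g' hg'] with t h1 h2 h3 ht
  have hmem : t ∈ Icc c d := ⟨ht.1.le, ht.2.le⟩
  have hn : Icc c d ∈ 𝓝 t := Icc_mem_nhds ht.1 ht.2
  have d1 : DifferentiableAt ℝ (fun u => G u + f u) t := (h1 hmem).differentiableAt hn
  have d2 : DifferentiableAt ℝ (fun u => G u - f u) t := (h2 hmem).differentiableAt hn
  have hft : DifferentiableAt ℝ f t := by
    have hfe : f = fun u => ((G u + f u) - (G u - f u))/2 := by funext u; ring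
    rw [hfe]
    exact (d1.sub d2).div_const 2
  refine ⟨hft, ?_⟩
  have hslope_f : Tendsto (fun y => |(f y - f t)/(y - t)|) (𝓝[>] t) (𝓝 |deriv f t|) := by
    have := hasDerivAt_iff_tendsto_slope.mp hft.hasDerivAt
    have h2 := this.mono_left (nhdsWithin_mono t (fun y hy => ne_of_gt hy))
    have h3 := h2.abs
    apply h3.congr
    intro y; rw [slope_def_field]
  have hslope_G : Tendsto (fun y => (G y - G t)/(y - t)) (𝓝[>] t) (𝓝 (g' t)) := by
    have := hasDerivAt_iff_tendsto_slope.mp h3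
    have h2 := this.mono_left (nhdsWithin_mono t (fun y hy => ne_of_gt hy))
    apply h2.congr
    intro y; rw [slope_def_field]
  have hle : |deriv f t| ≤ g' t := by
    apply le_of_tendsto_of_tendsto hslope_f hslope_G
    filter_upwards [Ioo_mem_nhdsGT ht.2] with y hy
    have hyt : 0 < y - t := by linarith [hy.1]
    rw [abs_div, abs_of_pos hyt, div_le_div_iff_of_pos_right hyt]
    exact hfG t y hmem.1 hy.1.le hy.2.le
  have htIoc : t ∈ Ioc c d := ⟨ht.1, ht.2.le⟩
  have he : g' t = g t := Set.indicator_of_mem htIoc g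
  rwa [he] at hle


lemma mono_lintegral_deriv {c d : ℝ} {G : ℝ → ℝ}
    (hm : MonotoneOn G (Icc c d)) (hc : ContinuousOn G (Icc c d)) :
    ∀ x y : ℝ, c ≤ x → x ≤ y → y < d →
    ∫⁻ r in Ioc x y, ENNReal.ofReal (deriv G r) ≤ ENNReal.ofReal (G y - G x) := by
  intro x y hcx hxy hyd
  rcases eq_or_lt_of_le hxy with rfl | hlt
  · simp
  have hcd : c < d := lt_of_le_of_lt (hcx.trans hxy) hyd
  have hGint : IntegrableOn G (Icc c d) := hc.integrableOn_Icc
  have hII : ∀ u v : ℝ, c ≤ u → u ≤ v → v ≤ d → IntervalIntegrable G volume u v := by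
    intro u v hu huv hv
    exact (hGint.mono_set (by rw [uIcc_of_le huv]; exact Icc_subset_Icc hu hv)).intervalIntegrable
  set h : ℕ → ℝ := fun k => (d - y)/(k+1) with hh
  have hpos : ∀ k, 0 < h k := by
    intro k; apply div_pos (by linarith); positivity
  have hyd' : ∀ k, y + h k ≤ d := by
    intro k
    have hk1 : (1:ℝ) ≤ (k:ℝ) + 1 := by
      have : (0:ℝ) ≤ (k:ℝ) := Nat.cast_nonneg k
      linarith
    have : h k ≤ d - y := by
      rw [hh]; exact div_le_self (by linarith) hk1
    linarith
  have hlim : Tendsto h atTop (𝓝 0) := by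
    have := tendsto_one_div_add_atTop_nhds_zero_nat (𝕜 := ℝ)
    have h2 := this.const_mul (d - y)
    simpa [hh, div_eq_mul_inv, mul_comm, one_div, mul_zero] using h2
  set Φ : ℕ → ℝ → ℝ≥0∞ := fun k r => ENNReal.ofReal ((G (r + h k) - G r)/(h k)) with hΦ
  -- a.e. differentiability
  have hdiff : ∀ᵐ r ∂volume, r ∈ Ioo c d → DifferentiableAt ℝ G r := by
    filter_upwards [hm.ae_differentiableWithinAt_of_mem] with r hr hr'
    exact (hr ⟨hr'.1.le, hr'.2.le⟩).differentiableAt (Icc_mem_nhds hr'.1 hr'.2)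
  -- pointwise liminf bound
  have hliminf : ∀ᵐ r ∂(volume.restrict (Ioc x y)),
      ENNReal.ofReal (deriv G r) ≤ liminf (fun k => Φ k r) atTop := by
    filter_upwards [ae_restrict_of_ae hdiff, ae_restrict_mem measurableSet_Ioc] with r hr hrm
    have hrIoo : r ∈ Ioo c d := ⟨lt_of_le_of_lt hcx hrm.1, lt_of_le_of_lt hrm.2 hyd⟩
    have hd := (hr hrIoo).hasDerivAt
    have hslope := hasDerivAt_iff_tendsto_slope.mp hd
    have htd : Tendsto (fun k => r + h k) atTop (𝓝[≠] r) := by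
      apply tendsto_nhdsWithin_of_tendsto_nhds_of_eventually_within
      · simpa using (tendsto_const_nhds.add hlim)
      · filter_upwards with k
        simp only [mem_compl_iff, mem_singleton_iff]
        have := hpos k; intro hcon; nlinarith [hcon]
    have := hslope.comp htd
    have heq : ∀ k, slope G r (r + h k) = (G (r + h k) - G r)/(h k) := by
      intro k; rw [slope_def_field]; congr 1; ring
    have h2 : Tendsto (fun k => (G (r + h k) - G r)/(h k)) atTop (𝓝 (deriv G r)) := by
      apply this.congr; intro k; exact heq k
    have h3 : Tendsto (fun k => Φ k r) atTop (𝓝 (ENNReal.ofReal (deriv G r))) :=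
      ENNReal.tendsto_ofReal h2
    exact (h3.liminf_eq).ge
  -- integral bound for each k
  have hk_bound : ∀ k, ∫⁻ r in Ioc x y, Φ k r ≤ ENNReal.ofReal (G (y + h k) - G x) := by
    intro k
    have hk := hpos k
    have hyk := hyd' k
    have hmap : MapsTo (fun r => r + h k) (Icc x y) (Icc c d) := by
      intro r hr
      rw [mem_Icc] at hr ⊢
      constructor
      · show c ≤ r + h k; linarith [hr.1, hk.le]
      · show r + h k ≤ d; linarith [hr.2, hyk]
    have hGkc : ContinuousOn (fun r => G (r + h k)) (Icc x y) :=
      hc.comp (Continuous.continuousOn (by continuity)) hmap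
    have hφcont : ContinuousOn (fun r => (G (r + h k) - G r)/(h k)) (Icc x y) :=
      (hGkc.sub (hc.mono (Icc_subset_Icc hcx (by linarith)))).div_const _
    have hφint : IntegrableOn (fun r => (G (r + h k) - G r)/(h k)) (Ioc x y) :=
      (hφcont.integrableOn_Icc).mono_set Ioc_subset_Icc_self
    have hφnn : ∀ᵐ r ∂(volume.restrict (Ioc x y)),
        0 ≤ (G (r + h k) - G r)/(h k) := by
      filter_upwards [ae_restrict_mem measurableSet_Ioc] with r hr
      apply div_nonneg _ hk.le
      have hmem1 : r ∈ Icc c d := ⟨le_trans hcx hr.1.le, le_trans hr.2 (by linarith)⟩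
      have hmem2 : r + h k ∈ Icc c d :=
        ⟨by linarith [hmem1.1, hk.le], by linarith [hr.2, hyk]⟩
      have := hm hmem1 hmem2 (by linarith [hk.le])
      linarith [this]
    rw [hΦ]
    rw [← ofReal_integral_eq_lintegral_ofReal hφint hφnn]
    apply ENNReal.ofReal_le_ofReal
    -- real integral computation
    have hGk : IntegrableOn (fun r => G (r + h k)) (Ioc x y) :=
      hGkc.integrableOn_Icc.mono_set Ioc_subset_Icc_self
    have hG' : IntegrableOn G (Ioc x y) :=
      (hGint.mono_set (Icc_subset_Icc hcx (by linarith))).mono_set Ioc_subset_Icc_self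
    have e1 : ∫ r in Ioc x y, (G (r + h k) - G r)/(h k)
        = ((∫ r in x..y, G (r + h k)) - ∫ r in x..y, G r) / h k := by
      rw [integral_div, integral_sub hGk hG', intervalIntegral.integral_of_le hxy,
        intervalIntegral.integral_of_le hxy]
    rw [e1]
    have e2 : (∫ r in x..y, G (r + h k)) = ∫ r in (x + h k)..(y + h k), G r :=
      intervalIntegral.integral_comp_add_right _ _
    have i1 : IntervalIntegrable G volume x (x + h k) := hII _ _ hcx (by linarith) (by linarith)
    have i2 : IntervalIntegrable G volume (x + h k) (y + h k) := hII _ _ (by linarith) (by linarith) (by linarith)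
    have i3 : IntervalIntegrable G volume x y := hII _ _ hcx hxy (by linarith)
    have i4 : IntervalIntegrable G volume y (y + h k) := hII _ _ (by linarith) (by linarith) (by linarith)
    have e3 : (∫ r in x..(x + h k), G r) + ∫ r in (x + h k)..(y + h k), G r
        = ∫ r in x..(y + h k), G r := intervalIntegral.integral_add_adjacent_intervals i1 i2
    have e4 : (∫ r in x..y, G r) + ∫ r in y..(y + h k), G r
        = ∫ r in x..(y + h k), G r := intervalIntegral.integral_add_adjacent_intervals i3 i4
    have b1 : (∫ r in y..(y + h k), G r) ≤ h k * G (y + h k) := by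
      have := intervalIntegral.integral_mono_on (by linarith : y ≤ y + h k) i4
        (intervalIntegrable_const (c := G (y + h k)))
        (fun r hr => hm ⟨by linarith [hr.1], by linarith [hr.2]⟩
          ⟨by linarith, by linarith⟩ hr.2)
      simpa [smul_eq_mul, mul_comm] using this
    have b2 : h k * G x ≤ ∫ r in x..(x + h k), G r := by
      have := intervalIntegral.integral_mono_on (by linarith : x ≤ x + h k)
        (intervalIntegrable_const (c := G x)) i1
        (fun r hr => hm ⟨hcx, by linarith⟩ ⟨by linarith [hr.1], by linarith [hr.2]⟩ hr.1)
      simpa [smul_eq_mul, mul_comm] using this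
    rw [div_le_iff₀ hk, e2]
    have : (∫ r in (x + h k)..(y + h k), G r) - ∫ r in x..y, G r
        = (∫ r in y..(y + h k), G r) - ∫ r in x..(x + h k), G r := by
      linarith [e3, e4]
    rw [this]
    nlinarith [b1, b2]
  -- measurability
  have hmeas : ∀ k, AEMeasurable (Φ k) (volume.restrict (Ioc x y)) := by
    intro k
    have hk := hpos k
    have hyk := hyd' k
    have hmap : MapsTo (fun r => r + h k) (Icc x y) (Icc c d) := by
      intro r hr
      rw [mem_Icc] at hr ⊢
      exact ⟨show c ≤ r + h k by linarith [hr.1, hk.le],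
        show r + h k ≤ d by linarith [hr.2, hyk]⟩
    have hφcont : ContinuousOn (fun r => (G (r + h k) - G r)/(h k)) (Ioc x y) :=
      (((hc.comp (Continuous.continuousOn (by continuity)) hmap).sub
        (hc.mono (Icc_subset_Icc hcx (by linarith)))).div_const _).mono Ioc_subset_Icc_self
    exact ENNReal.measurable_ofReal.comp_aemeasurable (hφcont.aemeasurable measurableSet_Ioc)
  -- Fatou
  calc ∫⁻ r in Ioc x y, ENNReal.ofReal (deriv G r)
      ≤ ∫⁻ r in Ioc x y, liminf (fun k => Φ k r) atTop := lintegral_mono_ae hliminf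
    _ ≤ liminf (fun k => ∫⁻ r in Ioc x y, Φ k r) atTop := lintegral_liminf_le' hmeas
    _ ≤ liminf (fun k => ENNReal.ofReal (G (y + h k) - G x)) atTop := by
        exact liminf_le_liminf (Eventually.of_forall fun k => hk_bound k)
    _ = ENNReal.ofReal (G y - G x) := by
        apply Tendsto.liminf_eq
        apply ENNReal.tendsto_ofReal
        apply Tendsto.sub_const
        have : Tendsto (fun k => y + h k) atTop (𝓝[Icc c d] y) := by
          apply tendsto_nhdsWithin_of_tendsto_nhds_of_eventually_within
          · simpa using (tendsto_const_nhds.add hlim)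
          · filter_upwards with k
            have := (hpos k).le
            rw [mem_Icc]
            exact ⟨by linarith, hyd' k⟩
        exact (hc.continuousWithinAt ⟨by linarith, by linarith⟩).tendsto.comp this

section
variable {c d : ℝ} {g f : ℝ → ℝ}

lemma ftc_eq (hcd : c < d) (hgi : IntegrableOn g (Ioc c d))
    (hf : ∀ x y : ℝ, c ≤ x → x ≤ y → y ≤ d → |f y - f x| ≤ ∫ r in x..y, g r) :
    ∀ x y : ℝ, c ≤ x → x ≤ y → y < d → f y - f x = ∫ r in x..y, deriv f r := by
  intro x y hx hxy hyd
  rcases eq_or_lt_of_le hxy with rfl | hlt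
  · simp
  set g' : ℝ → ℝ := (Ioc c d).indicator g with hg'def
  have hg' : Integrable g' := (integrable_indicator_iff measurableSet_Ioc).2 hgi
  set G : ℝ → ℝ := fun u => ∫ r in (0:ℝ)..u, g' r with hGdef
  have hΔG : ∀ u v : ℝ, G v - G u = ∫ r in u..v, g' r := fun u v =>
    primitive_sub g' hg' u v
  have hfG : ∀ x y : ℝ, c ≤ x → x ≤ y → y ≤ d → |f y - f x| ≤ G y - G x := by
    intro x y hx hxy hy
    rw [hΔG, indicator_interval_eq hgi hx hxy hy]
    exact hf x y hx hxy hy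
  have hGcont : Continuous G := intervalIntegral.continuous_primitive
    (fun a b => hg'.intervalIntegrable) 0
  have hfcont : ContinuousOn f (Icc c d) := by
    intro t htm
    have key : ∀ u ∈ Icc c d, |f u - f t| ≤ |G u - G t| := by
      intro u hu
      rcases le_total t u with h | h
      · exact le_trans (hfG t u htm.1 h hu.2) (le_abs_self _)
      · rw [abs_sub_comm, abs_sub_comm (G u)]
        exact le_trans (hfG u t hu.1 h htm.2) (le_abs_self _)
    rw [ContinuousWithinAt, tendsto_iff_dist_tendsto_zero]
    apply squeeze_zero' (by filter_upwards with u using dist_nonneg)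
      (g := fun u => |G u - G t|)
    · filter_upwards [self_mem_nhdsWithin] with u hu
      rw [Real.dist_eq]
      exact key u hu
    · have : Tendsto (fun u => G u - G t) (𝓝[Icc c d] t) (𝓝 (G t - G t)) :=
        ((hGcont.tendsto t).mono_left nhdsWithin_le_nhds).sub_const _
      rw [sub_self] at this
      simpa using this.abs
  have hmono : MonotoneOn (fun u => G u + f u) (Icc c d) ∧
      MonotoneOn (fun u => G u - f u) (Icc c d) := by
    constructor <;>
    · intro u hu v hv huv
      have := abs_le.mp (hfG u v hu.1 huv hv.2)
      simp only
      linarith [this.1, this.2]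
  -- deriv f integrable and ae facts on Ioc x y
  have hsub : Ioc x y ⊆ Ioo c d := fun r hr => ⟨lt_of_le_of_lt hx hr.1, lt_of_le_of_lt hr.2 hyd⟩
  have hae : ∀ᵐ r ∂(volume.restrict (Ioc x y)),
      DifferentiableAt ℝ f r ∧ |deriv f r| ≤ g r ∧ HasDerivAt G (g' r) r ∧ g' r = g r := by
    filter_upwards [ae_restrict_of_ae (diff_bound hcd hgi hf),
      ae_restrict_of_ae (ae_hasDeriv_primitive g' hg'), ae_restrict_mem measurableSet_Ioc]
      with r h1 h2 hrm
    have hroo := hsub hrm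
    have hrcd : r ∈ Ioc c d := ⟨lt_of_le_of_lt hx hrm.1, hrm.2.trans hyd.le⟩
    exact ⟨(h1 hroo).1, (h1 hroo).2, h2, Set.indicator_of_mem hrcd g⟩
  have hgIoc : IntegrableOn g (Ioc x y) := hgi.mono_set (Ioc_subset_Ioc hx hyd.le)
  have hdf_int : IntegrableOn (deriv f) (Ioc x y) := by
    apply Integrable.mono hgIoc (measurable_deriv f).aestronglyMeasurable
    filter_upwards [hae] with r hr
    rw [Real.norm_eq_abs, Real.norm_eq_abs]
    exact hr.2.1.trans (le_abs_self _)
  have hg'Ioc : IntegrableOn g' (Ioc x y) := hg'.integrableOn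
  -- key inequality, one direction for each of the two monotone functions
  have key : ∀ (s : ℝ) (F : ℝ → ℝ), (∀ u, F u = G u + s * f u) → s = 1 ∨ s = -1 →
      (∫ r in Ioc x y, (g' r + s * deriv f r)) ≤ (G y + s * f y) - (G x + s * f x) := by
    intro s F hFdef hs
    have hFmono : MonotoneOn F (Icc c d) := by
      rcases hs with rfl | rfl
      · intro u hu v hv huv
        have h : G u + f u ≤ G v + f v := hmono.1 hu hv huv
        rw [hFdef, hFdef]
        linarith
      · intro u hu v hv huv
        have h : G u - f u ≤ G v - f v := hmono.2 hu hv huv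
        rw [hFdef, hFdef]
        linarith
    have hFcont : ContinuousOn F (Icc c d) := by
      have : ContinuousOn (fun u => G u + s * f u) (Icc c d) :=
        (hGcont.continuousOn).add (continuousOn_const.mul hfcont)
      exact this.congr (fun u _ => hFdef u)
    have hlin := mono_lintegral_deriv hFmono hFcont x y hx hxy hyd
    have haeF : ∀ᵐ r ∂(volume.restrict (Ioc x y)),
        ENNReal.ofReal (deriv F r) = ENNReal.ofReal (g' r + s * deriv f r) := by
      filter_upwards [hae] with r hr
      have hF : HasDerivAt F (g' r + s * deriv f r) r := by
        have h1 : HasDerivAt (fun u => G u + s * f u) (g' r + s * deriv f r) r :=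
          hr.2.2.1.add ((hr.1.hasDerivAt).const_mul s)
        exact h1.congr_of_eventuallyEq (by filter_upwards with u using (hFdef u))
      rw [hF.deriv]
    rw [lintegral_congr_ae haeF] at hlin
    have hnn : ∀ᵐ r ∂(volume.restrict (Ioc x y)), 0 ≤ g' r + s * deriv f r := by
      filter_upwards [hae] with r hr
      have := abs_le.mp hr.2.1
      rcases hs with rfl | rfl
      · rw [hr.2.2.2]; linarith [this.1]
      · rw [hr.2.2.2]; linarith [this.2]
    have hint : IntegrableOn (fun r => g' r + s * deriv f r) (Ioc x y) :=
      hg'Ioc.add (hdf_int.const_mul s)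
    rw [← ofReal_integral_eq_lintegral_ofReal hint hnn] at hlin
    have hFyx : F x ≤ F y := hFmono ⟨hx, by linarith⟩ ⟨hx.trans hxy, hyd.le⟩ hxy
    rw [ENNReal.ofReal_le_ofReal_iff (by linarith [hFyx])] at hlin
    calc (∫ r in Ioc x y, (g' r + s * deriv f r)) ≤ F y - F x := hlin
      _ = (G y + s * f y) - (G x + s * f x) := by rw [hFdef, hFdef]
  have k1 := key 1 (fun u => G u + 1 * f u) (fun u => rfl) (Or.inl rfl)
  have k2 := key (-1) (fun u => G u + (-1) * f u) (fun u => rfl) (Or.inr rfl)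
  have hsplit : ∀ s : ℝ, (∫ r in Ioc x y, (g' r + s * deriv f r))
      = (∫ r in Ioc x y, g' r) + s * ∫ r in Ioc x y, deriv f r := by
    intro s
    rw [integral_add hg'Ioc (hdf_int.const_mul s), integral_const_mul]
  rw [hsplit] at k1 k2
  have hGyx : G y - G x = ∫ r in Ioc x y, g' r := by
    rw [hΔG x y, intervalIntegral.integral_of_le hxy]
  rw [intervalIntegral.integral_of_le hxy]
  nlinarith [k1, k2, hGyx]
end

/-- Existence of the metric derivative of a curve in `AC^p(a,b;X)`:
it exists a.e., belongs to `L^p`, realizes the defining integral estimate, and is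
(a.e.) minimal among all admissible `L^p` densities. -/
theorem stmt1 {X : Type*} [MetricSpace X] [CompleteSpace X]
    (a b : EReal) (hab : a < b) (p : ℝ≥0∞) (hp : 1 ≤ p) (v : ℝ → X) (m : ℝ → ℝ)
    (hm : MemLp m p (volume.restrict {x : ℝ | a < (x : EReal) ∧ (x : EReal) < b}))
    (hineq : ∀ s t : ℝ, a < (s : EReal) → s ≤ t → (t : EReal) < b →
      dist (v s) (v t) ≤ ∫ r in s..t, m r) :
    ∃ md : ℝ → ℝ,
      IsMetricDerivOn v {x : ℝ | a < (x : EReal) ∧ (x : EReal) < b} md ∧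
      MemLp md p (volume.restrict {x : ℝ | a < (x : EReal) ∧ (x : EReal) < b}) ∧
      (∀ s t : ℝ, a < (s : EReal) → s ≤ t → (t : EReal) < b →
        dist (v s) (v t) ≤ ∫ r in s..t, md r) ∧
      ∀ m' : ℝ → ℝ,
        MemLp m' p (volume.restrict {x : ℝ | a < (x : EReal) ∧ (x : EReal) < b}) →
        (∀ s t : ℝ, a < (s : EReal) → s ≤ t → (t : EReal) < b →
          dist (v s) (v t) ≤ ∫ r in s..t, m' r) →
        ∀ᵐ t ∂(volume.restrict {x : ℝ | a < (x : EReal) ∧ (x : EReal) < b}),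
          md t ≤ m' t := by
  classical
  set S : Set ℝ := {x : ℝ | a < (x : EReal) ∧ (x : EReal) < b} with hSdef
  have hSopen : IsOpen S := by
    have h : S = ((↑) : ℝ → EReal) ⁻¹' (Ioi a) ∩ ((↑) : ℝ → EReal) ⁻¹' (Iio b) := rfl
    rw [h]
    exact (isOpen_Ioi.preimage continuous_coe_real_ereal).inter
      (isOpen_Iio.preimage continuous_coe_real_ereal)
  have hSmeas : MeasurableSet S := hSopen.measurableSet
  have hmemS : ∀ {x z y : ℝ}, x ∈ S → y ∈ S → x ≤ z → z ≤ y → z ∈ S := by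
    intro x z y hx hy h1 h2
    exact ⟨lt_of_lt_of_le hx.1 (EReal.coe_le_coe_iff.2 h1),
      lt_of_le_of_lt (EReal.coe_le_coe_iff.2 h2) hy.2⟩
  have hopen' : ∀ t ∈ S, ∃ ε > (0:ℝ), Ioo (t - ε) (t + ε) ⊆ S := by
    intro t ht
    rcases Metric.isOpen_iff.1 hSopen t ht with ⟨ε, hε, hball⟩
    refine ⟨ε, hε, ?_⟩
    rw [← Real.ball_eq_Ioo]; exact hball
  have hL1 : ∀ (g : ℝ → ℝ), MemLp g p (volume.restrict S) →
      ∀ x y : ℝ, x ∈ S → y ∈ S → IntegrableOn g (Ioc x y) := by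
    intro g hg x y hx hy
    rcases le_or_gt y x with h | h
    · rw [Ioc_eq_empty (not_lt.2 h)]; exact integrableOn_empty
    · have hsub2 : Ioc x y ⊆ S := fun z hz => hmemS hx hy hz.1.le hz.2
      have h1 := hg.restrict (Ioc x y)
      rw [Measure.restrict_restrict measurableSet_Ioc, inter_eq_left.mpr hsub2] at h1
      haveI : IsFiniteMeasure (volume.restrict (Ioc x y)) :=
        ⟨by rw [Measure.restrict_apply_univ]; exact measure_Ioc_lt_top⟩
      exact memLp_one_iff_integrable.1 (h1.mono_exponent hp)
  have hII : ∀ (g : ℝ → ℝ), (∀ x y : ℝ, x ∈ S → y ∈ S → IntegrableOn g (Ioc x y)) →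
      ∀ x y : ℝ, x ∈ S → y ∈ S → IntervalIntegrable g volume x y := by
    intro g hg x y hx hy
    rw [intervalIntegrable_iff]
    rcases le_total x y with h | h
    · rw [uIoc_of_le h]; exact hg x y hx hy
    · rw [uIoc_of_ge h]; exact hg y x hy hx
  set m₀ : ℝ → ℝ := fun x => |m x| with hm₀def
  have hm₀ : MemLp m₀ p (volume.restrict S) := by
    have h := hm.norm
    simpa [hm₀def, Real.norm_eq_abs] using h
  have hm₀Int := hL1 m₀ hm₀
  have hineq₀ : ∀ x y : ℝ, x ∈ S → y ∈ S → x ≤ y →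
      dist (v x) (v y) ≤ ∫ r in x..y, m₀ r := by
    intro x y hx hy hxy
    refine le_trans (hineq x y hx.1 hxy hy.2) ?_
    apply intervalIntegral.integral_mono_on hxy (hII m (hL1 m hm) x y hx hy)
      (hII m₀ hm₀Int x y hx hy)
    intro r _; exact le_abs_self _
  -- continuity of v within S
  have hvcont : ∀ t ∈ S, ContinuousWithinAt v S t := by
    intro t ht
    obtain ⟨ε, hε, hsub⟩ := hopen' t ht
    have hcS : t - ε/2 ∈ S := hsub ⟨by linarith, by linarith⟩
    have hdS : t + ε/2 ∈ S := hsub ⟨by linarith, by linarith⟩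
    set c := t - ε/2
    set d := t + ε/2
    set g' : ℝ → ℝ := (Ioc c d).indicator m₀ with hg'def
    have hg' : Integrable g' := (integrable_indicator_iff measurableSet_Ioc).2 (hm₀Int c d hcS hdS)
    set P : ℝ → ℝ := fun u => ∫ r in (0:ℝ)..u, g' r with hPdef
    have hPcont : Continuous P := intervalIntegral.continuous_primitive
      (fun a b => hg'.intervalIntegrable) 0
    have hdist : ∀ s ∈ Icc c d, dist (v s) (v t) ≤ |P s - P t| := by
      intro s hs
      have hkey : ∀ u w : ℝ, c ≤ u → u ≤ w → w ≤ d → dist (v u) (v w) ≤ P w - P u := by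
        intro u w h1 h2 h3
        have huS : u ∈ S := hmemS hcS hdS h1 (h2.trans h3)
        have hwS : w ∈ S := hmemS hcS hdS (h1.trans h2) h3
        refine le_trans (hineq₀ u w huS hwS h2) ?_
        rw [primitive_sub g' hg' u w, indicator_interval_eq (hm₀Int c d hcS hdS) h1 h2 h3]
      have htm : t ∈ Icc c d := ⟨by simp [c]; linarith, by simp [d]; linarith⟩
      rcases le_total s t with h | h
      · exact le_trans (hkey s t hs.1 h htm.2) (by rw [abs_sub_comm]; exact le_abs_self _)
      · rw [dist_comm]
        exact le_trans (hkey t s htm.1 h hs.2) (le_abs_self _)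
    have hIccS : ContinuousWithinAt v (Icc c d) t := by
      rw [ContinuousWithinAt, tendsto_iff_dist_tendsto_zero]
      apply squeeze_zero' (by filter_upwards with u using dist_nonneg)
        (g := fun s => |P s - P t|)
      · filter_upwards [self_mem_nhdsWithin] with s hs using hdist s hs
      · have h1 : Tendsto (fun s => P s - P t) (𝓝[Icc c d] t) (𝓝 (P t - P t)) :=
          ((hPcont.tendsto t).mono_left nhdsWithin_le_nhds).sub_const _
        rw [sub_self] at h1
        simpa using h1.abs
    refine hIccS.mono_left ?_
    refine nhdsWithin_le_iff.2 (nhdsWithin_le_nhds ?_)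
    exact Icc_mem_nhds (by simp [c]; linarith) (by simp [d]; linarith)
  -- dense countable sequence
  obtain ⟨t₀, ht₀⟩ : ∃ t, t ∈ S := by
    rcases EReal.exists_between_coe_real hab with ⟨x, h1, h2⟩; exact ⟨x, h1, h2⟩
  set Q : Set ℝ := S ∩ range ((↑) : ℚ → ℝ) with hQdef
  have hQc : Q.Countable := (countable_range ((↑) : ℚ → ℝ)).mono inter_subset_right
  have hQne : Q.Nonempty := by
    rcases hopen' t₀ ht₀ with ⟨ε, hε, hsub⟩
    rcases exists_rat_btwn (show t₀ - ε < t₀ by linarith) with ⟨r, hr1, hr2⟩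
    exact ⟨r, hsub ⟨by linarith, by linarith⟩, ⟨r, rfl⟩⟩
  have hQdense : ∀ t ∈ S, ∀ δ > (0:ℝ), ∃ x ∈ Q, dist t x < δ := by
    intro t ht δ hδ
    rcases hopen' t ht with ⟨ε, hε, hsub⟩
    have hlt : t - min δ ε < t := by
      have := lt_min hδ hε; linarith [lt_min hδ hε]
    rcases exists_rat_btwn hlt with ⟨r, hr1, hr2⟩
    have h1 : min δ ε ≤ ε := min_le_right _ _
    have h2 : min δ ε ≤ δ := min_le_left _ _
    refine ⟨r, ⟨hsub ⟨by linarith, by linarith⟩, ⟨r, rfl⟩⟩, ?_⟩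
    rw [Real.dist_eq, abs_of_pos (by linarith)]
    linarith
  obtain ⟨q, hq⟩ := hQc.exists_eq_range hQne
  have hqS : ∀ n, q n ∈ S := by
    intro n
    have : q n ∈ Q := by rw [hq]; exact mem_range_self n
    exact this.1
  -- distance functions and candidate metric derivative
  set f : ℕ → ℝ → ℝ := fun n t => dist (v t) (v (q n)) with hfdef
  have hfbound : ∀ (n : ℕ) (x y : ℝ), |f n y - f n x| ≤ dist (v x) (v y) := by
    intro n x y
    rw [dist_comm]
    exact abs_dist_sub_le (v y) (v x) (v (q n))
  set D : ℕ → ℝ → ℝ := fun n => deriv (f n) with hDdef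
  have hDmeas : ∀ n, Measurable (D n) := fun n => measurable_deriv (f n)
  set mdE : ℝ → ℝ≥0∞ := fun t => ⨆ n, ENNReal.ofReal |D n t| with hmdEdef
  set md : ℝ → ℝ := fun t => (mdE t).toReal with hmddef
  have hmdmeas : Measurable md := by
    apply Measurable.ennreal_toReal
    exact Measurable.iSup (fun n => ENNReal.measurable_ofReal.comp (hDmeas n).abs)
  have hmd0 : ∀ t, 0 ≤ md t := fun t => ENNReal.toReal_nonneg
  have hflocal : ∀ (g : ℝ → ℝ),
      (∀ x y : ℝ, x ∈ S → y ∈ S → x ≤ y → dist (v x) (v y) ≤ ∫ r in x..y, g r) →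
      ∀ (n : ℕ) {c d : ℝ}, c ∈ S → d ∈ S →
      ∀ x y : ℝ, c ≤ x → x ≤ y → y ≤ d → |f n y - f n x| ≤ ∫ r in x..y, g r := by
    intro g hg n c d hc hd x y h1 h2 h3
    exact le_trans (hfbound n x y)
      (hg x y (hmemS hc hd h1 (h2.trans h3)) (hmemS hc hd (h1.trans h2) h3) h2)
  -- gluing lemma: derivative bounds a.e. from any admissible density
  have hglue : ∀ (g : ℝ → ℝ), (∀ x y : ℝ, x ∈ S → y ∈ S → IntegrableOn g (Ioc x y)) →
      (∀ x y : ℝ, x ∈ S → y ∈ S → x ≤ y → dist (v x) (v y) ≤ ∫ r in x..y, g r) →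
      ∀ᵐ t ∂volume, t ∈ S → ∀ n, DifferentiableAt ℝ (f n) t ∧ |D n t| ≤ g t := by
    intro g hgint hg
    have hpair : ∀ (pr : ℚ × ℚ × ℕ), ∀ᵐ t ∂volume,
        ((pr.1:ℝ) ∈ S → ((pr.2.1:ℝ)) ∈ S → (pr.1:ℝ) < (pr.2.1:ℝ) →
          t ∈ Ioo (pr.1:ℝ) (pr.2.1:ℝ) →
          DifferentiableAt ℝ (f pr.2.2) t ∧ |D pr.2.2 t| ≤ g t) := by
      rintro ⟨r₁, r₂, n⟩
      by_cases hcase : (r₁:ℝ) ∈ S ∧ ((r₂:ℝ)) ∈ S ∧ (r₁:ℝ) < (r₂:ℝ)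
      · obtain ⟨h1, h2, h3⟩ := hcase
        filter_upwards [diff_bound h3 (hgint _ _ h1 h2) (hflocal g hg n h1 h2)]
          with t ht _ _ _ hIoo
        exact ht hIoo
      · filter_upwards with t h1 h2 h3 _
        exact absurd ⟨h1, h2, h3⟩ hcase
    filter_upwards [ae_all_iff.2 hpair] with t ht htS n
    rcases hopen' t htS with ⟨ε, hε, hsub⟩
    rcases exists_rat_btwn (show t - ε < t by linarith) with ⟨r₁, hr₁, hr₁'⟩
    rcases exists_rat_btwn (show t < t + ε by linarith) with ⟨r₂, hr₂, hr₂'⟩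
    exact ht (r₁, r₂, n) (hsub ⟨by linarith, by linarith⟩)
      (hsub ⟨by linarith, by linarith⟩) (by linarith) ⟨hr₁', hr₂⟩
  have hKey := hglue m₀ hm₀Int hineq₀
  have hKey2 : ∀ᵐ t ∂volume, t ∈ S → (∀ n, |D n t| ≤ md t) ∧ md t ≤ m₀ t := by
    filter_upwards [hKey] with t ht htS
    have hb := ht htS
    have hsup : mdE t ≤ ENNReal.ofReal (m₀ t) :=
      iSup_le fun n => ENNReal.ofReal_le_ofReal (hb n).2
    have hne : mdE t ≠ ⊤ := (lt_of_le_of_lt hsup ENNReal.ofReal_lt_top).ne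
    constructor
    · intro n
      have h1 : ENNReal.ofReal |D n t| ≤ mdE t := le_iSup (fun n => ENNReal.ofReal |D n t|) n
      have h2 := ENNReal.toReal_mono hne h1
      rwa [ENNReal.toReal_ofReal (abs_nonneg _)] at h2
    · have h2 := ENNReal.toReal_mono ENNReal.ofReal_ne_top hsup
      rwa [ENNReal.toReal_ofReal (abs_nonneg _)] at h2
  have hmdInt : ∀ x y : ℝ, x ∈ S → y ∈ S → IntegrableOn md (Ioc x y) := by
    intro x y hx hy
    rcases le_or_gt y x with h | h
    · rw [Ioc_eq_empty (not_lt.2 h)]; exact integrableOn_empty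
    · have hss : Ioc x y ⊆ S := fun z hz => hmemS hx hy hz.1.le hz.2
      apply Integrable.mono (hm₀Int x y hx hy) hmdmeas.aestronglyMeasurable
      filter_upwards [ae_restrict_of_ae hKey2, ae_restrict_mem measurableSet_Ioc] with t ht htm
      rw [Real.norm_eq_abs, Real.norm_eq_abs, abs_of_nonneg (hmd0 t)]
      exact le_trans (ht (hss htm)).2 (le_abs_self _)
  -- FTC-based interval bound for the approximating functions
  have hftc : ∀ (n : ℕ) (x y : ℝ), x ∈ S → y ∈ S → x ≤ y →
      |f n y - f n x| ≤ ∫ r in x..y, md r := by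
    intro n x y hx hy hxy
    rcases eq_or_lt_of_le hxy with rfl | hlt
    · simp
    obtain ⟨ε₁, hε₁, hsub₁⟩ := hopen' x hx
    obtain ⟨ε₂, hε₂, hsub₂⟩ := hopen' y hy
    have hcS : x - ε₁/2 ∈ S := hsub₁ ⟨by linarith, by linarith⟩
    have hdS : y + ε₂/2 ∈ S := hsub₂ ⟨by linarith, by linarith⟩
    set c := x - ε₁/2
    set d := y + ε₂/2
    have hcd : c < d := by simp only [c, d]; linarith
    have heq := ftc_eq hcd (hm₀Int c d hcS hdS) (hflocal m₀ hineq₀ n hcS hdS) x y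
      (by simp only [c]; linarith) hxy (by simp only [d]; linarith)
    rw [heq]
    have hIccS : Icc x y ⊆ S := fun z hz => hmemS hx hy hz.1 hz.2
    have hDb : ∀ᵐ r ∂(volume.restrict (Icc x y)), |D n r| ≤ md r := by
      filter_upwards [ae_restrict_of_ae hKey2, ae_restrict_mem measurableSet_Icc] with r hr hrm
      exact (hr (hIccS hrm)).1 n
    have hmdII : IntervalIntegrable md volume x y := hII md hmdInt x y hx hy
    have hDint : IntervalIntegrable (D n) volume x y := by
      rw [intervalIntegrable_iff, uIoc_of_le hxy]
      apply Integrable.mono (hmdInt x y hx hy) (hDmeas n).aestronglyMeasurable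
      filter_upwards [ae_restrict_of_ae hKey2, ae_restrict_mem measurableSet_Ioc] with r hr hrm
      rw [Real.norm_eq_abs, Real.norm_eq_abs, abs_of_nonneg (hmd0 r)]
      exact (hr (hmemS hx hy hrm.1.le hrm.2)).1 n
    calc |∫ r in x..y, D n r| ≤ ∫ r in x..y, |D n r| :=
          intervalIntegral.abs_integral_le_integral_abs hxy
      _ ≤ ∫ r in x..y, md r := by
          apply intervalIntegral.integral_mono_ae_restrict hxy hDint.abs hmdII
          filter_upwards [hDb] with r hr using hr
  -- main integral inequality for md
  have hB : ∀ x y : ℝ, x ∈ S → y ∈ S → x ≤ y →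
      dist (v x) (v y) ≤ ∫ r in x..y, md r := by
    intro x y hx hy hxy
    apply le_of_forall_pos_le_add
    intro ε hε
    have hclQ : y ∈ closure Q := by
      rw [Metric.mem_closure_iff]
      intro δ hδ
      exact hQdense y hy δ hδ
    have hcl : v y ∈ closure (v '' Q) :=
      ((hvcont y hy).mono (inter_subset_left)).mem_closure_image hclQ
    rcases Metric.mem_closure_iff.1 hcl (ε/2) (by linarith) with ⟨w, hw, hwd⟩
    rcases hw with ⟨u, huQ, rfl⟩
    have : u ∈ range q := by rw [← hq]; exact huQ
    rcases this with ⟨n, rfl⟩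
    have h1 : dist (v x) (v y) ≤ f n x + f n y := by
      rw [hfdef]
      calc dist (v x) (v y) ≤ dist (v x) (v (q n)) + dist (v (q n)) (v y) := dist_triangle _ _ _
        _ = dist (v x) (v (q n)) + dist (v y) (v (q n)) := by rw [dist_comm (v (q n))]
    have h2 : f n x ≤ |f n y - f n x| + f n y := by
      have := abs_le.1 (le_refl |f n y - f n x|)
      have h3 : -(|f n y - f n x|) ≤ f n y - f n x := neg_abs_le _
      linarith
    have h4 : f n y < ε/2 := by
      rw [hfdef]
      exact hwd
    calc dist (v x) (v y) ≤ f n x + f n y := h1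
      _ ≤ |f n y - f n x| + f n y + f n y := by linarith
      _ ≤ (∫ r in x..y, md r) + ε := by
          have := hftc n x y hx hy hxy
          linarith
  -- Memℒp of md
  have hmdLp : MemLp md p (volume.restrict S) := by
    apply MemLp.of_le hm hmdmeas.aestronglyMeasurable
    filter_upwards [ae_restrict_of_ae hKey2, ae_restrict_mem hSmeas] with t ht htS
    rw [Real.norm_eq_abs, Real.norm_eq_abs, abs_of_nonneg (hmd0 t)]
    exact (ht htS).2
  -- Lebesgue point statements for md
  have hLeb : ∀ᵐ t ∂volume, ∀ (pr : ℚ × ℚ), ((pr.1:ℝ) ∈ S → (pr.2:ℝ) ∈ S → (pr.1:ℝ) < (pr.2:ℝ) →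
      (Tendsto (fun s => ⨍ r in Icc t s,
          |(Ioc (pr.1:ℝ) (pr.2:ℝ)).indicator md r - (Ioc (pr.1:ℝ) (pr.2:ℝ)).indicator md t|)
        (𝓝[>] t) (𝓝 0) ∧
       Tendsto (fun s => ⨍ r in Icc s t,
          |(Ioc (pr.1:ℝ) (pr.2:ℝ)).indicator md r - (Ioc (pr.1:ℝ) (pr.2:ℝ)).indicator md t|)
        (𝓝[<] t) (𝓝 0))) := by
    apply ae_all_iff.2
    rintro ⟨r₁, r₂⟩
    by_cases hcase : (r₁:ℝ) ∈ S ∧ ((r₂:ℝ)) ∈ S ∧ (r₁:ℝ) < (r₂:ℝ)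
    · obtain ⟨h1, h2, h3⟩ := hcase
      have hgi : Integrable ((Ioc (r₁:ℝ) (r₂:ℝ)).indicator md) :=
        (integrable_indicator_iff measurableSet_Ioc).2 (hmdInt _ _ h1 h2)
      filter_upwards [ae_leb _ hgi] with t ht _ _ _
      exact ht
    · filter_upwards with t h1 h2 h3
      exact absurd ⟨h1, h2, h3⟩ hcase
  refine ⟨md, ?_, hmdLp, ?_, ?_⟩
  · -- metric derivative
    rw [IsMetricDerivOn, ae_restrict_iff' hSmeas]
    filter_upwards [hKey, hKey2, hLeb] with t htK htK2 htLeb htS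
    obtain ⟨ε₀, hε₀, hsub⟩ := hopen' t htS
    rcases exists_rat_btwn (show t - ε₀ < t by linarith) with ⟨r₁, hr₁, hr₁t⟩
    rcases exists_rat_btwn (show t < t + ε₀ by linarith) with ⟨r₂, hr₂t, hr₂⟩
    have hr₁S : (r₁:ℝ) ∈ S := hsub ⟨by linarith, by linarith⟩
    have hr₂S : (r₂:ℝ) ∈ S := hsub ⟨by linarith, by linarith⟩
    set g : ℝ → ℝ := (Ioc (r₁:ℝ) (r₂:ℝ)).indicator md with hgdef
    have htIoc : t ∈ Ioc (r₁:ℝ) (r₂:ℝ) := ⟨hr₁t, hr₂t.le⟩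
    have hgt : g t = md t := Set.indicator_of_mem htIoc md
    obtain ⟨havgR, havgL⟩ := htLeb (r₁, r₂) hr₁S hr₂S (by exact_mod_cast lt_trans hr₁t hr₂t)
    have hgint : Integrable g := (integrable_indicator_iff measurableSet_Ioc).2
      (hmdInt _ _ hr₁S hr₂S)
    rw [tendsto_order]
    constructor
    · intro l hl
      have hex : ∃ n, l < |D n t| := by
        by_contra hcon
        push_neg at hcon
        have hs1 : mdE t ≤ ENNReal.ofReal l :=
          iSup_le fun n => ENNReal.ofReal_le_ofReal (hcon n)
        have h0 : (0:ℝ) ≤ l := le_trans (abs_nonneg _) (hcon 0)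
        have : md t ≤ l := by
          have h2 := ENNReal.toReal_mono ENNReal.ofReal_ne_top hs1
          rwa [ENNReal.toReal_ofReal h0] at h2
        linarith
      obtain ⟨n, hn⟩ := hex
      have hdiff := (htK htS n).1
      have hslope : Tendsto (fun s => |f n s - f n t| / |s - t|) (𝓝[S \ {t}] t)
          (𝓝 |D n t|) := by
        have h1 := hasDerivAt_iff_tendsto_slope.mp hdiff.hasDerivAt
        have hfilt : 𝓝[S \ {t}] t ≤ 𝓝[{t}ᶜ] t :=
          nhdsWithin_mono t (fun s hs => hs.2)
        have h2 := (h1.mono_left hfilt).abs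
        apply h2.congr
        intro s
        rw [slope_def_field, abs_div]
      filter_upwards [hslope.eventually (eventually_gt_nhds hn)] with s hs
      refine lt_of_lt_of_le hs ?_
      have hnum : |f n s - f n t| ≤ dist (v s) (v t) := by
        rw [dist_comm]; exact hfbound n t s
      exact div_le_div_of_nonneg_right hnum (abs_nonneg _)
    · intro u hu
      have hδR : ∀ᶠ s in 𝓝[>] t, s ∈ S \ {t} → dist (v s) (v t) / |s - t| < u := by
        have hav : ∀ᶠ s in 𝓝[>] t, (⨍ r in Icc t s, |g r - g t|) < u - md t :=
          havgR.eventually (gt_mem_nhds (by linarith))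
        filter_upwards [hav, Ioo_mem_nhdsGT hr₂t, self_mem_nhdsWithin]
          with s havs hsIoo hst hmem
        have hts : t < s := hst
        have hsr₂ : s < (r₂:ℝ) := hsIoo.2
        have hsS : s ∈ S := hmem.1
        have hd : dist (v s) (v t) ≤ ∫ r in t..s, md r := by
          rw [dist_comm]; exact hB t s htS hsS hts.le
        have hgeq : (∫ r in t..s, md r) = ∫ r in t..s, g r := by
          refine (intervalIntegral.integral_congr ?_).symm
          intro r hr
          rw [uIcc_of_le hts.le] at hr
          have hrm : r ∈ Ioc (r₁:ℝ) (r₂:ℝ) := ⟨lt_of_lt_of_le hr₁t hr.1, hr.2.trans hsr₂.le⟩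
          exact Set.indicator_of_mem hrm md
        have hquot := quot_sub_le (g := g) (md t) hts hgint.integrableOn
        have habs : |s - t| = s - t := abs_of_pos (by linarith)
        rw [hgt] at havs
        calc dist (v s) (v t) / |s - t| = (s - t)⁻¹ * dist (v s) (v t) := by
              rw [habs, div_eq_inv_mul]
          _ ≤ (s - t)⁻¹ * ∫ r in t..s, g r := by
              rw [← hgeq]
              exact mul_le_mul_of_nonneg_left hd (inv_nonneg.2 (by linarith))
          _ ≤ md t + |(s - t)⁻¹ * (∫ r in t..s, g r) - md t| := by
              linarith [le_abs_self ((s - t)⁻¹ * (∫ r in t..s, g r) - md t)]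
          _ ≤ md t + ⨍ r in Icc t s, |g r - md t| := by linarith [hquot]
          _ < u := by linarith [havs]
      have hδL : ∀ᶠ s in 𝓝[<] t, s ∈ S \ {t} → dist (v s) (v t) / |s - t| < u := by
        have hav : ∀ᶠ s in 𝓝[<] t, (⨍ r in Icc s t, |g r - g t|) < u - md t :=
          havgL.eventually (gt_mem_nhds (by linarith))
        filter_upwards [hav, Ioo_mem_nhdsLT hr₁t, self_mem_nhdsWithin]
          with s havs hsIoo hst hmem
        have hst' : s < t := hst
        have hr₁s : (r₁:ℝ) < s := hsIoo.1
        have hsS : s ∈ S := hmem.1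
        have hd : dist (v s) (v t) ≤ ∫ r in s..t, md r := hB s t hsS htS hst'.le
        have hgeq : (∫ r in s..t, md r) = ∫ r in s..t, g r := by
          refine (intervalIntegral.integral_congr ?_).symm
          intro r hr
          rw [uIcc_of_le hst'.le] at hr
          have hrm : r ∈ Ioc (r₁:ℝ) (r₂:ℝ) := ⟨lt_of_lt_of_le hr₁s hr.1, hr.2.trans hr₂t.le⟩
          exact Set.indicator_of_mem hrm md
        have hquot := quot_sub_le (g := g) (md t) hst' hgint.integrableOn
        have habs : |s - t| = t - s := by rw [abs_sub_comm]; exact abs_of_pos (by linarith)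
        rw [hgt] at havs
        calc dist (v s) (v t) / |s - t| = (t - s)⁻¹ * dist (v s) (v t) := by
              rw [habs, div_eq_inv_mul]
          _ ≤ (t - s)⁻¹ * ∫ r in s..t, g r := by
              rw [← hgeq]
              exact mul_le_mul_of_nonneg_left hd (inv_nonneg.2 (by linarith))
          _ ≤ md t + |(t - s)⁻¹ * (∫ r in s..t, g r) - md t| := by
              linarith [le_abs_self ((t - s)⁻¹ * (∫ r in s..t, g r) - md t)]
          _ ≤ md t + ⨍ r in Icc s t, |g r - md t| := by linarith [hquot]
          _ < u := by linarith [havs]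
      have hcomb : ∀ᶠ s in 𝓝[{t}ᶜ] t, s ∈ S \ {t} → dist (v s) (v t) / |s - t| < u := by
        rw [← nhdsLT_sup_nhdsGT t, eventually_sup]
        exact ⟨hδL, hδR⟩
      have hfilt : 𝓝[S \ {t}] t ≤ 𝓝[{t}ᶜ] t :=
        nhdsWithin_mono t (fun s hs => hs.2)
      filter_upwards [Eventually.filter_mono hfilt hcomb,
        self_mem_nhdsWithin] with s h1 h2
      exact h1 h2
  · -- integral inequality
    intro s t hs hst htb
    have hsS : s ∈ S := ⟨hs, lt_of_le_of_lt (EReal.coe_le_coe_iff.2 hst) htb⟩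
    have htS : t ∈ S := ⟨lt_of_lt_of_le hs (EReal.coe_le_coe_iff.2 hst), htb⟩
    exact hB s t hsS htS hst
  · -- minimality
    intro m' hm' hineq'
    have hineq'' : ∀ x y : ℝ, x ∈ S → y ∈ S → x ≤ y →
        dist (v x) (v y) ≤ ∫ r in x..y, m' r := fun x y hx hy hxy =>
      hineq' x y hx.1 hxy hy.2
    have hglue' := hglue m' (hL1 m' hm') hineq''
    rw [ae_restrict_iff' hSmeas]
    filter_upwards [hglue'] with t h1 htS
    have hb := h1 htS
    have hsup : mdE t ≤ ENNReal.ofReal (m' t) :=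
      iSup_le fun n => ENNReal.ofReal_le_ofReal (hb n).2
    have h0 : 0 ≤ m' t := le_trans (abs_nonneg _) (hb 0).2
    have h2 := ENNReal.toReal_mono ENNReal.ofReal_ne_top hsup
    rwa [ENNReal.toReal_ofReal h0] at h2
end
end
end

section
/- Let E : M → (-∞,+∞] be a proper functional with strong upper gradient g, and let v : [0,+∞) → M be a p-gradient flow of E. Suppose for some t₀ ≥ 0, E restricted to the closure of I_{t₀}(v) = {v(t): t ≥ t₀} is bounded from below, and g restricted to the closure of I_{t₀}(v) is lower semicontinuous. Then every point φ of the ω-limit set ω(v) satisfies g(φ) = 0, i.e. ω(v) is contained in the set of equilibrium points E_g = g⁻¹({0}). -/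
open MeasureTheory Set Filter Topology Metric
open scoped ENNReal

noncomputable section

lemma mem_ITo_top {x : ℝ} : x ∈ ITo (⊤ : EReal) ↔ 0 < x :=
  ⟨fun h => h.1, fun h => ⟨h, EReal.coe_lt_top x⟩⟩

/-- The basic energy-dissipation estimate: the integral of the slope/metric-speed terms over
`(a,b]` is bounded by the drop of the energy. -/
lemma diss_bound {X : Type*} [MetricSpace X]
    (E : X → EReal) (g : X → ℝ≥0∞) (p : ℝ) (v : ℝ → X) (md : ℝ → ℝ)
    (hflow : IsPGradientFlow E g p ⊤ v md) {a b : ℝ} (ha : 0 < a) (hab : a ≤ b) :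
    ∫⁻ t in Ioc a b,
        (g (v t) ^ (p / (p - 1)) / ENNReal.ofReal (p / (p - 1)) +
          ENNReal.ofReal (md t ^ p / p)) ≤
      ENNReal.ofReal ((E (v a)).toReal - (E (v b)).toReal) := by
  obtain ⟨hmd0, hint, hdist, hmderiv, hfin, hanti, hdiss⟩ := hflow
  set fE : ℝ → ℝ := fun t => (E (v t)).toReal with hfE
  set h : ℝ → ℝ := fun x => - fE (min b (max a x)) with hh
  have hclamp_mem : ∀ x : ℝ, min b (max a x) ∈ ITo (⊤ : EReal) := by
    intro x
    refine mem_ITo_top.2 ?_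
    have h1 : a ≤ min b (max a x) := le_min hab (le_max_left _ _)
    linarith
  have hmono : Monotone h := by
    intro x y hxy
    have h1 : min b (max a x) ≤ min b (max a y) :=
      min_le_min le_rfl (max_le_max le_rfl hxy)
    exact neg_le_neg (hanti (hclamp_mem x) (hclamp_mem y) h1)
  set F := hmono.stieltjesFunction with hFdef
  have key : ∀ᵐ t ∂(volume.restrict (Ioo a b)),
      g (v t) ^ (p / (p - 1)) / ENNReal.ofReal (p / (p - 1)) +
          ENNReal.ofReal (md t ^ p / p) ≤ F.measure.rnDeriv volume t := by
    have h1 : ∀ᵐ t ∂(volume.restrict (Ioo a b)),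
        HasDerivAt h ((F.measure.rnDeriv volume t).toReal) t :=
      ae_restrict_of_ae hmono.ae_hasDerivAt
    have hsub : Ioo a b ⊆ ITo (⊤ : EReal) := fun x hx => mem_ITo_top.2 (ha.trans hx.1)
    have h2 := ae_restrict_of_ae_restrict_of_subset hsub hdiss
    have h3 : ∀ᵐ t ∂(volume.restrict (Ioo a b)), t ∈ Ioo a b :=
      ae_restrict_mem measurableSet_Ioo
    filter_upwards [h1, h2, h3] with t h1t h2t h3t
    obtain ⟨D, hD, hD0, hDG⟩ := h2t
    have heq : h =ᶠ[nhds t] fun y => - fE y := by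
      filter_upwards [isOpen_Ioo.mem_nhds h3t] with y hy
      simp only [hh, max_eq_right hy.1.le, min_eq_right hy.2.le]
    have hD' : HasDerivAt h (-D) t := HasDerivAt.congr_of_eventuallyEq hD.neg heq
    have huniq : (F.measure.rnDeriv volume t).toReal = -D := h1t.unique hD'
    calc g (v t) ^ (p / (p - 1)) / ENNReal.ofReal (p / (p - 1)) +
          ENNReal.ofReal (md t ^ p / p) ≤ ENNReal.ofReal (-D) := hDG
      _ = ENNReal.ofReal ((F.measure.rnDeriv volume t).toReal) := by rw [huniq]
      _ ≤ F.measure.rnDeriv volume t := ENNReal.ofReal_toReal_le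
  have hFb : F b ≤ - fE b := by
    have h3 : Function.rightLim h b ≤ h (b + 1) := hmono.rightLim_le (lt_add_one b)
    have h4 : h (b + 1) = - fE b := by
      simp only [hh]
      rw [max_eq_right (by linarith), min_eq_left (by linarith)]
    rw [hmono.stieltjesFunction_eq b, ← h4]
    exact h3
  have hFa : - fE a ≤ F a := by
    have h1 : h a = - fE a := by
      simp only [hh]
      rw [max_eq_left le_rfl, min_eq_right hab]
    rw [hmono.stieltjesFunction_eq a, ← h1]
    exact hmono.le_rightLim le_rfl
  calc ∫⁻ t in Ioc a b,
        (g (v t) ^ (p / (p - 1)) / ENNReal.ofReal (p / (p - 1)) +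
          ENNReal.ofReal (md t ^ p / p))
      = ∫⁻ t in Ioo a b,
        (g (v t) ^ (p / (p - 1)) / ENNReal.ofReal (p / (p - 1)) +
          ENNReal.ofReal (md t ^ p / p)) := by
        rw [Measure.restrict_congr_set Ioo_ae_eq_Ioc]
    _ ≤ ∫⁻ t in Ioo a b, F.measure.rnDeriv volume t := lintegral_mono_ae key
    _ ≤ F.measure (Ioo a b) := Measure.setLIntegral_rnDeriv_le _
    _ ≤ F.measure (Ioc a b) := measure_mono Ioo_subset_Ioc_self
    _ = ENNReal.ofReal (F b - F a) := F.measure_Ioc a b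
    _ ≤ ENNReal.ofReal (fE a - fE b) := ENNReal.ofReal_le_ofReal (by linarith)

/-- Tail smallness for a function with uniformly bounded integrals over `(t₁, t₁+n]`. -/
lemma tail_small (G : ℝ → ℝ≥0∞) (t₁ : ℝ) (C : ℝ≥0∞) (hC : C ≠ ⊤)
    (hbound : ∀ n : ℕ, ∫⁻ t in Ioc t₁ (t₁ + (n : ℝ)), G t ≤ C)
    {ε : ℝ≥0∞} (hε : ε ≠ 0) :
    ∃ N : ℝ, t₁ ≤ N ∧ ∀ s e : ℝ, N ≤ s → s ≤ e → ∫⁻ t in Ioc s e, G t < ε := by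
  set A := ⨆ n : ℕ, ∫⁻ t in Ioc t₁ (t₁ + (n : ℝ)), G t with hA
  have hAfin : A ≠ ⊤ := ne_top_of_le_ne_top hC (iSup_le hbound)
  rcases lt_or_ge A ε with hcase | hcase
  · refine ⟨t₁, le_rfl, fun s e hs hse => ?_⟩
    obtain ⟨m, hm⟩ := exists_nat_ge (e - t₁)
    have hsub : Ioc s e ⊆ Ioc t₁ (t₁ + (m : ℝ)) := Ioc_subset_Ioc hs (by linarith)
    calc ∫⁻ t in Ioc s e, G t ≤ ∫⁻ t in Ioc t₁ (t₁ + (m : ℝ)), G t := lintegral_mono_set hsub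
      _ ≤ A := le_iSup (fun n : ℕ => ∫⁻ t in Ioc t₁ (t₁ + (n : ℝ)), G t) m
      _ < ε := hcase
  · have hA0 : A ≠ 0 := by
      intro h
      rw [h] at hcase
      exact hε (le_antisymm hcase (zero_le))
    have hlt : A - ε < A := ENNReal.sub_lt_self hAfin hA0 hε
    rw [hA, lt_iSup_iff] at hlt
    obtain ⟨n₀, hn₀⟩ := hlt
    have hn₀nn : (0 : ℝ) ≤ (n₀ : ℝ) := n₀.cast_nonneg
    refine ⟨t₁ + (n₀ : ℝ), by linarith, fun s e hs hse => ?_⟩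
    obtain ⟨m', hm'⟩ := exists_nat_ge (e - t₁)
    set m := max m' n₀ with hm
    have hnm : (n₀ : ℝ) ≤ (m : ℝ) := Nat.cast_le.2 (le_max_right _ _)
    have hem : e ≤ t₁ + (m : ℝ) := by
      have : (m' : ℝ) ≤ (m : ℝ) := Nat.cast_le.2 (le_max_left _ _)
      linarith
    have hsplit : ∫⁻ t in Ioc t₁ (t₁ + (m : ℝ)), G t =
        (∫⁻ t in Ioc t₁ (t₁ + (n₀ : ℝ)), G t) +
          ∫⁻ t in Ioc (t₁ + (n₀ : ℝ)) (t₁ + (m : ℝ)), G t := by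
      have hu := lintegral_union (μ := volume) (f := G)
        (A := Ioc t₁ (t₁ + (n₀ : ℝ))) (B := Ioc (t₁ + (n₀ : ℝ)) (t₁ + (m : ℝ)))
        measurableSet_Ioc (Set.Ioc_disjoint_Ioc_of_le le_rfl)
      rw [Set.Ioc_union_Ioc_eq_Ioc (by linarith) (by linarith)] at hu
      exact hu
    have h1 : ∫⁻ t in Ioc s e, G t ≤ ∫⁻ t in Ioc (t₁ + (n₀ : ℝ)) (t₁ + (m : ℝ)), G t :=
      lintegral_mono_set (Ioc_subset_Ioc hs hem)
    have h2 : ∫⁻ t in Ioc t₁ (t₁ + (m : ℝ)), G t ≤ A :=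
      le_iSup (fun n : ℕ => ∫⁻ t in Ioc t₁ (t₁ + (n : ℝ)), G t) m
    have hεtop : ε ≠ ⊤ := ne_top_of_le_ne_top hAfin hcase
    have h3 : A < (∫⁻ t in Ioc t₁ (t₁ + (n₀ : ℝ)), G t) + ε := by
      have h4 := ENNReal.add_lt_add_right hεtop hn₀
      rwa [tsub_add_cancel_of_le hcase] at h4
    have hfin0 : ∫⁻ t in Ioc t₁ (t₁ + (n₀ : ℝ)), G t ≠ ⊤ :=
      ne_top_of_le_ne_top hAfin
        (le_trans (le_iSup (fun n : ℕ => ∫⁻ t in Ioc t₁ (t₁ + (n : ℝ)), G t) n₀) le_rfl)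
    have h4 : (∫⁻ t in Ioc t₁ (t₁ + (n₀ : ℝ)), G t) +
        ∫⁻ t in Ioc (t₁ + (n₀ : ℝ)) (t₁ + (m : ℝ)), G t <
        (∫⁻ t in Ioc t₁ (t₁ + (n₀ : ℝ)), G t) + ε := by
      rw [← hsplit]
      exact lt_of_le_of_lt h2 h3
    exact lt_of_le_of_lt h1 ((ENNReal.add_lt_add_iff_left hfin0).1 h4)

/-- ω-limit points of `p`-gradient flows are equilibrium points: if `E`
is bounded below on the closure of the image `{v t : t ≥ t₀}` and `g` is lower
semicontinuous there, then `g φ = 0` for every ω-limit point `φ` of `v`. -/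
theorem stmt6 {X : Type*} [MetricSpace X] [CompleteSpace X]
    (E : X → EReal) (g : X → ℝ≥0∞)
    (hproper : ∃ x, E x ≠ ⊤) (hbot : ∀ x, E x ≠ ⊥)
    (hsug : StrongUpperGradient E g)
    (p : ℝ) (hp : 1 < p) (v : ℝ → X) (md : ℝ → ℝ)
    (hflow : IsPGradientFlow E g p ⊤ v md)
    (t₀ : ℝ) (ht₀ : 0 ≤ t₀)
    (hbdd : ∃ c : ℝ, ∀ x ∈ closure (v '' Ici t₀), (c : EReal) ≤ E x)
    (hglsc : LowerSemicontinuousOn g (closure (v '' Ici t₀))) :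
    ∀ φ : X,
      (∃ tn : ℕ → ℝ, Tendsto tn atTop atTop ∧
        Tendsto (fun n => v (tn n)) atTop (nhds φ)) →
      g φ = 0 := by
  intro φ hφ
  obtain ⟨tn, htn, hconv⟩ := hφ
  by_contra hg0
  have hgpos : 0 < g φ := pos_iff_ne_zero.2 hg0
  have hφS : φ ∈ closure (v '' Ici t₀) := by
    apply mem_closure_of_tendsto hconv
    filter_upwards [htn.eventually_ge_atTop t₀] with n hn
    exact ⟨tn n, hn, rfl⟩
  obtain ⟨c', hc'0, hc'g⟩ := exists_between hgpos
  have hc'top : c' ≠ ⊤ := (hc'g.trans_le le_top).ne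
  have hev : ∀ᶠ y in nhdsWithin φ (closure (v '' Ici t₀)), c' < g y := hglsc φ hφS c' hc'g
  obtain ⟨r, hr0, hrball⟩ := Metric.mem_nhdsWithin_iff.1 hev
  have hp1 : 0 < p - 1 := by linarith
  have hp'1 : 1 < p / (p - 1) := by
    rw [lt_div_iff₀ hp1]; linarith
  have hp'0 : 0 < p / (p - 1) := lt_trans one_pos hp'1
  have ht₁0 : 0 < max t₀ 0 + 1 := by
    have := le_max_right t₀ 0; linarith
  have ht₁t₀ : t₀ ≤ max t₀ 0 + 1 := by
    have := le_max_left t₀ 0; linarith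
  set t₁ := max t₀ 0 + 1 with ht₁def
  obtain ⟨c, hc⟩ := hbdd
  -- uniform bound on the dissipation integrals
  have hbound : ∀ n : ℕ, ∫⁻ t in Ioc t₁ (t₁ + (n : ℝ)),
      (g (v t) ^ (p / (p - 1)) / ENNReal.ofReal (p / (p - 1)) +
        ENNReal.ofReal (md t ^ p / p)) ≤ ENNReal.ofReal ((E (v t₁)).toReal - c) := by
    intro n
    have hnn : (0 : ℝ) ≤ (n : ℝ) := n.cast_nonneg
    have h1 := diss_bound E g p v md hflow ht₁0
      (le_add_of_nonneg_right n.cast_nonneg : t₁ ≤ t₁ + (n : ℝ))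
    refine h1.trans (ENNReal.ofReal_le_ofReal ?_)
    have hmem : v (t₁ + (n : ℝ)) ∈ closure (v '' Ici t₀) :=
      subset_closure ⟨t₁ + (n : ℝ), by simp only [mem_Ici]; linarith, rfl⟩
    have hcE := hc _ hmem
    have hfinE := hflow.2.2.2.2.1 (t₁ + (n : ℝ))
      (mem_ITo_top.2 (by linarith))
    have h2 : c ≤ (E (v (t₁ + (n : ℝ)))).toReal := by
      have h3 := EReal.toReal_le_toReal hcE (EReal.coe_ne_bot c) hfinE.1
      simpa using h3
    linarith
  -- choose the length of the small intervals and the smallness threshold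
  have hδ0 : (0 : ℝ) < r / 4 := by linarith
  have hη0 : (0 : ℝ≥0∞) <
      c' ^ (p / (p - 1)) / ENNReal.ofReal (p / (p - 1)) * ENNReal.ofReal (r / 4) := by
    refine ENNReal.mul_pos ?_ (ENNReal.ofReal_pos.2 hδ0).ne'
    exact (ENNReal.div_pos (ENNReal.rpow_pos hc'0 hc'top).ne' ENNReal.ofReal_ne_top).ne'
  have hε0 : min (c' ^ (p / (p - 1)) / ENNReal.ofReal (p / (p - 1)) * ENNReal.ofReal (r / 4))
      (ENNReal.ofReal (r / 8)) ≠ 0 :=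
    (lt_min hη0 (ENNReal.ofReal_pos.2 (by linarith))).ne'
  obtain ⟨N, hNt₁, hN⟩ := tail_small
    (fun t => g (v t) ^ (p / (p - 1)) / ENNReal.ofReal (p / (p - 1)) +
      ENNReal.ofReal (md t ^ p / p)) t₁ _ ENNReal.ofReal_ne_top hbound hε0
  -- choose a large time s = tn n
  obtain ⟨n, hnN, hndist⟩ : ∃ n, N ≤ tn n ∧ dist (v (tn n)) φ < r / 4 := by
    have hev1 : ∀ᶠ n in atTop, N ≤ tn n := htn.eventually_ge_atTop N
    have hev2 : ∀ᶠ n in atTop, dist (v (tn n)) φ < r / 4 := by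
      have := Metric.tendsto_atTop.1 hconv (r / 4) hδ0
      obtain ⟨N₂, hN₂⟩ := this
      exact eventually_atTop.2 ⟨N₂, fun n hn => hN₂ n hn⟩
    exact (hev1.and hev2).exists
  set s := tn n with hsdef
  have hst₁ : t₁ ≤ s := hNt₁.trans hnN
  have hs0 : 0 < s := lt_of_lt_of_le ht₁0 hst₁
  have hIocε := hN s (s + r / 4) hnN (by linarith)
  -- distance estimate along the flow on (s, s + r/4]
  have hmdpart : ∀ t ∈ Ioc s (s + r / 4), dist (v s) (v t) ≤ r / 8 + r / 4 := by
    intro t ht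
    obtain ⟨hts, htd⟩ := ht
    have hd1 : dist (v s) (v t) ≤ ∫ x in s..t, md x :=
      hflow.2.2.1 s t hs0 hts.le (EReal.coe_lt_top t)
    rw [intervalIntegral.integral_of_le hts.le] at hd1
    have hintmd : IntegrableOn md (Ioc s t) volume :=
      hflow.2.1 s t hs0 hts.le (EReal.coe_lt_top t)
    have hmdnn : ∀ x ∈ Ioc s t, 0 ≤ md x := fun x hx =>
      hflow.1 x (mem_ITo_top.2 (hs0.trans hx.1))
    have hlsmall : ∫⁻ x in Ioc s t, ENNReal.ofReal (md x ^ p / p) ≤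
        ENNReal.ofReal (r / 8) := by
      calc ∫⁻ x in Ioc s t, ENNReal.ofReal (md x ^ p / p)
          ≤ ∫⁻ x in Ioc s (s + r / 4), ENNReal.ofReal (md x ^ p / p) :=
            lintegral_mono_set (Ioc_subset_Ioc le_rfl htd)
        _ ≤ ∫⁻ x in Ioc s (s + r / 4),
            (g (v x) ^ (p / (p - 1)) / ENNReal.ofReal (p / (p - 1)) +
              ENNReal.ofReal (md x ^ p / p)) := lintegral_mono fun x => le_add_self
        _ ≤ min (c' ^ (p / (p - 1)) / ENNReal.ofReal (p / (p - 1)) * ENNReal.ofReal (r / 4))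
            (ENNReal.ofReal (r / 8)) := hIocε.le
        _ ≤ ENNReal.ofReal (r / 8) := min_le_right _ _
    have hmdae : AEStronglyMeasurable (fun x => md x ^ p / p) (volume.restrict (Ioc s t)) := by
      have hcont : Continuous fun x : ℝ => x ^ p / p :=
        (continuous_iff_continuousAt.2 fun x =>
          Real.continuousAt_rpow_const x p (Or.inr (by linarith))).div_const p
      exact hcont.comp_aestronglyMeasurable hintmd.aestronglyMeasurable
    have hnnae : 0 ≤ᵐ[volume.restrict (Ioc s t)] fun x => md x ^ p / p :=
      (ae_restrict_iff' measurableSet_Ioc).2 (ae_of_all _ fun x hx =>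
        div_nonneg (Real.rpow_nonneg (hmdnn x hx) p) (by linarith))
    have hfinint : IntegrableOn (fun x => md x ^ p / p) (Ioc s t) volume := by
      refine ⟨hmdae, ?_⟩
      rw [hasFiniteIntegral_iff_ofReal hnnae]
      exact lt_of_le_of_lt hlsmall ENNReal.ofReal_lt_top
    have hconstint : IntegrableOn (fun _ : ℝ => 1 / (p / (p - 1))) (Ioc s t) volume :=
      integrableOn_const measure_Ioc_lt_top.ne enorm_ne_top
    have hmono2 : ∫ x in Ioc s t, md x ≤
        ∫ x in Ioc s t, (md x ^ p / p + 1 / (p / (p - 1))) := by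
      refine setIntegral_mono_on hintmd (hfinint.add hconstint) measurableSet_Ioc
        fun x hx => ?_
      have h0 := hmdnn x hx
      have hy := Real.young_inequality_of_nonneg h0 zero_le_one
        (Real.HolderConjugate.conjExponent hp)
      simpa [Real.conjExponent, Real.one_rpow] using hy
    have hsplitint : ∫ x in Ioc s t, (md x ^ p / p + 1 / (p / (p - 1))) =
        (∫ x in Ioc s t, md x ^ p / p) + ∫ x in Ioc s t, (1 : ℝ) / (p / (p - 1)) :=
      integral_add hfinint hconstint
    have hconst_eval : ∫ x in Ioc s t, (1 : ℝ) / (p / (p - 1)) =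
        (t - s) * (1 / (p / (p - 1))) := by
      rw [setIntegral_const, Real.volume_real_Ioc_of_le hts.le, smul_eq_mul]
    have hmdp_small : ∫ x in Ioc s t, md x ^ p / p ≤ r / 8 := by
      rw [integral_eq_lintegral_of_nonneg_ae hnnae hmdae]
      exact ENNReal.toReal_le_of_le_ofReal (by linarith) hlsmall
    have hconstbound : (t - s) * (1 / (p / (p - 1))) ≤ r / 4 := by
      have h1 : t - s ≤ r / 4 := by linarith
      have h2 : 1 / (p / (p - 1)) ≤ 1 := by
        rw [div_le_one hp'0]; linarith
      have h3 : 0 ≤ t - s := by linarith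
      calc (t - s) * (1 / (p / (p - 1))) ≤ (r / 4) * 1 :=
            mul_le_mul h1 h2 (by positivity) (by linarith)
        _ = r / 4 := mul_one _
    calc dist (v s) (v t) ≤ ∫ x in Ioc s t, md x := hd1
      _ ≤ ∫ x in Ioc s t, (md x ^ p / p + 1 / (p / (p - 1))) := hmono2
      _ = (∫ x in Ioc s t, md x ^ p / p) + ∫ x in Ioc s t, (1 : ℝ) / (p / (p - 1)) :=
          hsplitint
      _ ≤ r / 8 + r / 4 := by rw [hconst_eval]; exact add_le_add hmdp_small hconstbound
  -- on (s, s + r/4], `g ∘ v` is bounded below by `c'`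
  have hball : ∀ t ∈ Ioc s (s + r / 4), c' ≤ g (v t) := by
    intro t ht
    have hd : dist (v t) φ < r := by
      have h1 := hmdpart t ht
      have h2 := dist_triangle (v t) (v s) φ
      rw [dist_comm (v t) (v s)] at h2
      linarith
    have hmem : v t ∈ closure (v '' Ici t₀) :=
      subset_closure ⟨t, by simp only [mem_Ici]; linarith [ht.1], rfl⟩
    exact (hrball ⟨Metric.mem_ball.2 hd, hmem⟩).le
  -- contradiction: lower bound on the tail integral
  have hlower : c' ^ (p / (p - 1)) / ENNReal.ofReal (p / (p - 1)) * ENNReal.ofReal (r / 4) ≤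
      ∫⁻ t in Ioc s (s + r / 4),
        (g (v t) ^ (p / (p - 1)) / ENNReal.ofReal (p / (p - 1)) +
          ENNReal.ofReal (md t ^ p / p)) := by
    have hvol : volume (Ioc s (s + r / 4)) = ENNReal.ofReal (r / 4) := by
      rw [Real.volume_Ioc, add_sub_cancel_left]
    calc c' ^ (p / (p - 1)) / ENNReal.ofReal (p / (p - 1)) * ENNReal.ofReal (r / 4)
        = c' ^ (p / (p - 1)) / ENNReal.ofReal (p / (p - 1)) * volume (Ioc s (s + r / 4)) := by
          rw [hvol]
      _ = ∫⁻ _ in Ioc s (s + r / 4),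
          (c' ^ (p / (p - 1)) / ENNReal.ofReal (p / (p - 1))) := (setLIntegral_const _ _).symm
      _ ≤ _ := by
          refine lintegral_mono_ae ((ae_restrict_iff' measurableSet_Ioc).2
            (ae_of_all _ fun t ht => ?_))
          calc c' ^ (p / (p - 1)) / ENNReal.ofReal (p / (p - 1))
              ≤ g (v t) ^ (p / (p - 1)) / ENNReal.ofReal (p / (p - 1)) :=
                ENNReal.div_le_div_right
                  (ENNReal.rpow_le_rpow (hball t ht) hp'0.le) _
            _ ≤ _ := le_self_add
  exact absurd (hlower.trans_lt (hIocε.trans_le (min_le_left _ _))) (lt_irrefl _)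
end
end

section
/- Let λ ∈ ℝ and let E : M → (-∞,+∞] be a proper, λ-geodesically convex functional on a length space (M,d). Then for every u ∈ D(E), the descending slope satisfies |D⁻E|(u) = sup_{v ≠ u} [ (E(u) − E(v))/d(u,v) + (λ/2) d(u,v) ]⁺, and consequently E(u) − E(v) ≤ |D⁻E|(u)·d(v,u) − (λ/2) d²(v,u) for every v ∈ M. -/
open MeasureTheory Set Filter Topology Metric
open scoped ENNReal

noncomputable section

open Filter in
lemma erealPos_coe (r : ℝ) : ErealPos (r : EReal) = ENNReal.ofReal r := by
  simp [ErealPos]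

lemma erealPos_bot : ErealPos ⊥ = 0 := by simp [ErealPos]

lemma le_coe_erealPos (x : EReal) : x ≤ (ErealPos x : EReal) := by
  induction x with
  | bot => exact bot_le
  | coe r =>
    rw [erealPos_coe, EReal.coe_ennreal_ofReal]
    exact_mod_cast le_max_left r 0
  | top => simp [ErealPos]

lemma neBot_aux {X : Type*} [MetricSpace X] (hlen : IsLengthSpace X) {u w : X} (hw : w ≠ u) :
    (nhdsWithin u {u}ᶜ).NeBot := by
  rw [← mem_closure_iff_nhdsWithin_neBot, Metric.mem_closure_iff]
  intro ε hε
  obtain ⟨γ, h0, h1, hd⟩ := hlen u w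
  have hdu : 0 < dist u w := dist_pos.2 (Ne.symm hw)
  set t := min (ε / (2 * dist u w)) 1 with ht
  have ht0 : 0 < t := lt_min (by positivity) one_pos
  have ht1 : t ≤ 1 := min_le_right _ _
  have hdt : dist u (γ t) = t * dist u w := by
    have h := hd 0 t le_rfl ht0.le ht1
    rwa [h0, sub_zero] at h
  refine ⟨γ t, ?_, ?_⟩
  · rw [Set.mem_compl_singleton_iff]
    intro h
    rw [h, dist_self] at hdt
    exact absurd hdt.symm (ne_of_gt (by positivity))
  · rw [hdt]
    calc t * dist u w ≤ ε / (2 * dist u w) * dist u w :=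
          mul_le_mul_of_nonneg_right (min_le_left _ _) hdu.le
      _ = ε / 2 := by field_simp
      _ < ε := by linarith

open Filter in
lemma key_le_slope {X : Type*} [MetricSpace X]
    (E : X → EReal) (lam : ℝ) (hbot : ∀ x, E x ≠ ⊥) (hconv : GeodesicConvexWith E lam)
    {u w : X} (hutop : E u ≠ ⊤) (hw : w ≠ u)
    (hne : (nhdsWithin u {u}ᶜ).NeBot) :
    ErealPos (E u - E w + ((lam / 2 * dist u w ^ 2 : ℝ) : EReal)) /
      ENNReal.ofReal (dist u w) ≤ descSlope E u := by
  set d := dist u w with hdd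
  have hdu : 0 < d := dist_pos.2 (Ne.symm hw)
  set a := (E u).toReal with ha
  have hEua : E u = (a : EReal) := (EReal.coe_toReal hutop (hbot u)).symm
  by_cases hwtop : E w = ⊤
  · have : E u - E w + ((lam / 2 * d ^ 2 : ℝ) : EReal) = ⊥ := by
      rw [hwtop, EReal.sub_top, EReal.bot_add]
    rw [this, erealPos_bot, ENNReal.zero_div]
    exact zero_le
  · set b := (E w).toReal with hb
    have hEwb : E w = (b : EReal) := (EReal.coe_toReal hwtop (hbot w)).symm
    obtain ⟨γ, h0, h1, hd, hE⟩ := hconv u w hutop hwtop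
    set l : Filter ℝ := nhdsWithin 0 (Ioo (0:ℝ) 1) with hl
    have hlne : l.NeBot := by
      rw [hl, ← mem_closure_iff_nhdsWithin_neBot, closure_Ioo (by norm_num : (0:ℝ) ≠ 1)]
      exact ⟨le_rfl, by norm_num⟩
    have hdt : ∀ t ∈ Ioo (0:ℝ) 1, dist u (γ t) = t * d := by
      intro t ht
      have h := hd 0 t le_rfl ht.1.le ht.2.le
      rwa [h0, sub_zero] at h
    have hγne : ∀ t ∈ Ioo (0:ℝ) 1, γ t ≠ u := by
      intro t ht h
      have := hdt t ht
      rw [h, dist_self] at this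
      exact absurd this.symm (ne_of_gt (by nlinarith [ht.1]))
    set F : X → ℝ≥0∞ := fun v => ErealPos (E u - E v) / ENNReal.ofReal (dist u v) with hF
    set h : ℝ → ℝ≥0∞ :=
      fun t => ENNReal.ofReal ((a - b) + lam / 2 * (1 - t) * d ^ 2) / ENNReal.ofReal d with hh
    have hbound : ∀ t ∈ Ioo (0:ℝ) 1, h t ≤ F (γ t) := by
      intro t ht
      have hEt : E (γ t) ≤ (((1 - t) * a + t * b - lam / 2 * (t * (1 - t)) * d ^ 2 : ℝ) : EReal) := by
        have h2 := hE t ht.1.le ht.2.le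
        rw [hEua, hEwb] at h2
        exact_mod_cast h2
      have hγtop : E (γ t) ≠ ⊤ :=
        ne_top_of_le_ne_top (EReal.coe_ne_top _) hEt
      set e := (E (γ t)).toReal with he
      have hEγ : E (γ t) = (e : EReal) := (EReal.coe_toReal hγtop (hbot _)).symm
      have hee : e ≤ (1 - t) * a + t * b - lam / 2 * (t * (1 - t)) * d ^ 2 := by
        rw [hEγ] at hEt; exact_mod_cast hEt
      have hsub : E u - E (γ t) = ((a - e : ℝ) : EReal) := by
        rw [hEua, hEγ]; norm_cast
      have hkey : t * ((a - b) + lam / 2 * (1 - t) * d ^ 2) ≤ a - e := by nlinarith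
      rw [hF]
      simp only
      rw [hsub, erealPos_coe, hdt t ht]
      calc h t = ENNReal.ofReal (t * ((a - b) + lam / 2 * (1 - t) * d ^ 2)) /
            ENNReal.ofReal (t * d) := by
            rw [hh]
            simp only
            rw [ENNReal.ofReal_mul ht.1.le, ENNReal.ofReal_mul ht.1.le,
              ENNReal.mul_div_mul_left _ _ (by simp [ht.1]) ENNReal.ofReal_ne_top]
        _ ≤ ENNReal.ofReal (a - e) / ENNReal.ofReal (t * d) :=
            ENNReal.div_le_div_right (ENNReal.ofReal_le_ofReal hkey) _
    have hlim : Tendsto h l (nhds (ENNReal.ofReal ((a - b) + lam / 2 * d ^ 2) / ENNReal.ofReal d)) := by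
      have hcont : Tendsto (fun t : ℝ => ENNReal.ofReal ((a - b) + lam / 2 * (1 - t) * d ^ 2)) l
          (nhds (ENNReal.ofReal ((a - b) + lam / 2 * d ^ 2))) := by
        apply Tendsto.mono_left _ nhdsWithin_le_nhds
        have hc : Continuous (fun t : ℝ => ENNReal.ofReal ((a - b) + lam / 2 * (1 - t) * d ^ 2)) :=
          ENNReal.continuous_ofReal.comp (by fun_prop)
        have h3 := hc.tendsto 0
        simpa using h3
      exact ENNReal.Tendsto.div_const hcont
        (Or.inr (by simp only [ne_eq, ENNReal.ofReal_eq_zero, not_le]; linarith))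
    have hγtend : Tendsto γ l (nhdsWithin u {u}ᶜ) := by
      rw [tendsto_nhdsWithin_iff]
      constructor
      · rw [tendsto_iff_dist_tendsto_zero]
        have : Tendsto (fun t : ℝ => t * d) l (nhds 0) := by
          apply Tendsto.mono_left _ nhdsWithin_le_nhds
          have h4 : Tendsto (fun t : ℝ => t * d) (nhds 0) (nhds (0 * d)) := (continuous_id.mul (continuous_const : Continuous fun _ : ℝ => d)).tendsto (0:ℝ)
          simpa using h4
        apply this.congr'
        filter_upwards [self_mem_nhdsWithin] with t ht
        rw [dist_comm, hdt t ht]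
      · filter_upwards [self_mem_nhdsWithin] with t ht
        exact Set.mem_compl_singleton_iff.2 (hγne t ht)
    have e1 : ErealPos (E u - E w + ((lam / 2 * d ^ 2 : ℝ) : EReal)) / ENNReal.ofReal d
        = ENNReal.ofReal ((a - b) + lam / 2 * d ^ 2) / ENNReal.ofReal d := by
      have : E u - E w + ((lam / 2 * d ^ 2 : ℝ) : EReal) = (((a - b) + lam / 2 * d ^ 2 : ℝ) : EReal) := by
        rw [hEua, hEwb]; norm_cast
      rw [this, erealPos_coe]
    rw [e1]
    calc ENNReal.ofReal ((a - b) + lam / 2 * d ^ 2) / ENNReal.ofReal d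
        = liminf h l := (hlim.liminf_eq).symm
      _ ≤ liminf (F ∘ γ) l :=
          liminf_le_liminf (by
            filter_upwards [self_mem_nhdsWithin] with t ht
            exact hbound t ht)
      _ ≤ limsup (F ∘ γ) l := liminf_le_limsup
      _ = limsup F (map γ l) := limsup_comp F γ l
      _ ≤ limsup F (nhdsWithin u {u}ᶜ) := limsup_le_limsup_of_le hγtend
      _ = descSlope E u := rfl

open Filter in
lemma slope_le_sup {X : Type*} [MetricSpace X] (hlen : IsLengthSpace X)
    (E : X → EReal) (lam : ℝ) (hbot : ∀ x, E x ≠ ⊥) {u : X} (hutop : E u ≠ ⊤) :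
    descSlope E u ≤ ⨆ (w : X) (_ : w ≠ u),
      ErealPos (E u - E w + ((lam / 2 * dist u w ^ 2 : ℝ) : EReal)) /
        ENNReal.ofReal (dist u w) := by
  set R := ⨆ (w : X) (_ : w ≠ u),
      ErealPos (E u - E w + ((lam / 2 * dist u w ^ 2 : ℝ) : EReal)) /
        ENNReal.ofReal (dist u w) with hR
  by_cases hX : ∀ w : X, w = u
  · have hcompl : ({u}ᶜ : Set X) = ∅ := by
      ext v; simp [hX v]
    rw [descSlope, hcompl, nhdsWithin_empty, limsup_bot]
    exact bot_le
  · push_neg at hX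
    obtain ⟨w₀, hw₀⟩ := hX
    haveI := neBot_aux hlen hw₀
    set a := (E u).toReal with ha
    have hEua : E u = (a : EReal) := (EReal.coe_toReal hutop (hbot u)).symm
    have hpt : ∀ v ∈ ({u}ᶜ : Set X),
        ErealPos (E u - E v) / ENNReal.ofReal (dist u v) ≤
          R + ENNReal.ofReal (|lam| / 2 * dist u v) := by
      intro v hv
      rw [Set.mem_compl_singleton_iff] at hv
      have hdu : 0 < dist u v := dist_pos.2 (Ne.symm hv)
      set du := dist u v with hdud
      by_cases hvtop : E v = ⊤
      · rw [hvtop, EReal.sub_top, erealPos_bot, ENNReal.zero_div]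
        exact zero_le
      · set b := (E v).toReal with hb
        have hEvb : E v = (b : EReal) := (EReal.coe_toReal hvtop (hbot v)).symm
        have hx : E u - E v = ((a - b : ℝ) : EReal) := by rw [hEua, hEvb]; norm_cast
        have hxc : E u - E v + ((lam / 2 * du ^ 2 : ℝ) : EReal)
            = (((a - b) + lam / 2 * du ^ 2 : ℝ) : EReal) := by rw [hEua, hEvb]; norm_cast
        have hTR : ErealPos (E u - E v + ((lam / 2 * du ^ 2 : ℝ) : EReal)) /
            ENNReal.ofReal du ≤ R := by
          rw [hR]
          exact le_iSup₂ (f := fun (w : X) (_ : w ≠ u) =>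
            ErealPos (E u - E w + ((lam / 2 * dist u w ^ 2 : ℝ) : EReal)) /
              ENNReal.ofReal (dist u w)) v hv
        have hnum : ENNReal.ofReal (a - b) ≤
            ENNReal.ofReal ((a - b) + lam / 2 * du ^ 2) +
              ENNReal.ofReal (|lam| / 2 * du * du) := by
          calc ENNReal.ofReal (a - b)
              ≤ ENNReal.ofReal (((a - b) + lam / 2 * du ^ 2) + |lam| / 2 * du * du) := by
                apply ENNReal.ofReal_le_ofReal
                nlinarith [neg_abs_le lam, sq_nonneg du]
            _ ≤ _ := ENNReal.ofReal_add_le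
        calc ErealPos (E u - E v) / ENNReal.ofReal du
            = ENNReal.ofReal (a - b) / ENNReal.ofReal du := by rw [hx, erealPos_coe]
          _ ≤ (ENNReal.ofReal ((a - b) + lam / 2 * du ^ 2) +
                ENNReal.ofReal (|lam| / 2 * du * du)) / ENNReal.ofReal du :=
              ENNReal.div_le_div_right hnum _
          _ = ENNReal.ofReal ((a - b) + lam / 2 * du ^ 2) / ENNReal.ofReal du +
                ENNReal.ofReal (|lam| / 2 * du * du) / ENNReal.ofReal du :=
              ENNReal.add_div
          _ ≤ R + ENNReal.ofReal (|lam| / 2 * du) := by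
              apply add_le_add
              · rw [← erealPos_coe, ← hxc] at *
                exact hTR
              · have : ENNReal.ofReal (|lam| / 2 * du * du) =
                    ENNReal.ofReal (|lam| / 2 * du) * ENNReal.ofReal du :=
                  ENNReal.ofReal_mul (by positivity)
                rw [this, mul_div_assoc, ENNReal.div_self
                    (by simp only [ne_eq, ENNReal.ofReal_eq_zero, not_le]; linarith)
                    ENNReal.ofReal_ne_top, mul_one]
    have htend : Tendsto (fun v => R + ENNReal.ofReal (|lam| / 2 * dist u v))
        (nhdsWithin u {u}ᶜ) (nhds R) := by
      have h1 : Tendsto (fun v : X => ENNReal.ofReal (|lam| / 2 * dist u v))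
          (nhdsWithin u {u}ᶜ) (nhds 0) := by
        have hc : Continuous fun v : X => ENNReal.ofReal (|lam| / 2 * dist u v) :=
          ENNReal.continuous_ofReal.comp (by fun_prop)
        have h2 := (hc.tendsto u).mono_left
          (nhdsWithin_le_nhds (s := ({u}ᶜ : Set X)))
        simpa using h2
      have h3 := (tendsto_const_nhds (x := R)
        (f := nhdsWithin u ({u}ᶜ : Set X))).add h1
      simpa using h3
    calc descSlope E u
        ≤ limsup (fun v => R + ENNReal.ofReal (|lam| / 2 * dist u v)) (nhdsWithin u {u}ᶜ) :=
          limsup_le_limsup (by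
            filter_upwards [self_mem_nhdsWithin] with v hv
            exact hpt v hv)
      _ = R := htend.limsup_eq

/-- Representation of the descending slope of a `lam`-geodesically
convex functional on a length space:
`|D⁻E|(u) = sup_{w ≠ u} [(E u − E w)/d + (lam/2) d]⁺` (written here with the bracket
multiplied through by `d`), and consequently
`E u − E w ≤ |D⁻E|(u)·d(w,u) − (lam/2) d²(w,u)` for every `w`. -/
theorem stmt7 {X : Type*} [MetricSpace X] (hlen : IsLengthSpace X)
    (E : X → EReal) (lam : ℝ)
    (hproper : ∃ x, E x ≠ ⊤) (hbot : ∀ x, E x ≠ ⊥)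
    (hconv : GeodesicConvexWith E lam) :
    ∀ u : X, E u ≠ ⊤ →
      (descSlope E u = ⨆ (w : X) (_ : w ≠ u),
        ErealPos (E u - E w + ((lam / 2 * dist u w ^ 2 : ℝ) : EReal)) /
          ENNReal.ofReal (dist u w)) ∧
      ∀ w : X,
        E u - E w ≤ ((descSlope E u * ENNReal.ofReal (dist w u) : ℝ≥0∞) : EReal) -
          ((lam / 2 * dist w u ^ 2 : ℝ) : EReal) := by
  intro u hutop
  have hsup_le : (⨆ (w : X) (_ : w ≠ u),
      ErealPos (E u - E w + ((lam / 2 * dist u w ^ 2 : ℝ) : EReal)) /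
        ENNReal.ofReal (dist u w)) ≤ descSlope E u := by
    apply iSup₂_le
    intro w hw
    exact key_le_slope E lam hbot hconv hutop hw (neBot_aux hlen hw)
  constructor
  · exact le_antisymm (slope_le_sup hlen E lam hbot hutop) hsup_le
  · intro w
    by_cases hw : w = u
    · subst hw
      have h1 : E w - E w = (0 : EReal) := by
        rw [(EReal.coe_toReal hutop (hbot w)).symm]
        norm_cast
        simp
      rw [h1]
      simp
    · rw [dist_comm w u]
      have hkey := key_le_slope E lam hbot hconv hutop hw (neBot_aux hlen hw)
      have hdu : 0 < dist u w := dist_pos.2 (Ne.symm hw)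
      have hd0 : ENNReal.ofReal (dist u w) ≠ 0 := by
        simp only [ne_eq, ENNReal.ofReal_eq_zero, not_le]; linarith
      have h2 : ErealPos (E u - E w + ((lam / 2 * dist u w ^ 2 : ℝ) : EReal)) ≤
          descSlope E u * ENNReal.ofReal (dist u w) :=
        (ENNReal.div_le_iff hd0 ENNReal.ofReal_ne_top).1 hkey
      have h3 : E u - E w + ((lam / 2 * dist u w ^ 2 : ℝ) : EReal) ≤
          ((descSlope E u * ENNReal.ofReal (dist u w) : ℝ≥0∞) : EReal) :=
        le_trans (le_coe_erealPos _) (EReal.coe_ennreal_le_coe_ennreal_iff.2 h2)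
      exact (EReal.le_sub_iff_add_le
        (Or.inl (EReal.coe_ne_bot _)) (Or.inl (EReal.coe_ne_top _))).2 h3
end
end

section
/- Let E : M → (-∞,+∞] be a proper functional with strong upper gradient g on a complete metric space, and let v : [0,+∞) → M be a p-gradient flow of E with nonempty ω-limit set. Suppose E is lower semicontinuous on the closure of {v(t) : t ≥ t̄} for some t̄ ≥ 0, and φ ∈ ω(v) is an equilibrium point (g(φ)=0) such that the ball B(φ,ε) satisfies: E(w) > E(φ) implies g(w) > 0 for w ∈ B(φ,ε). If there is a strictly increasing θ ∈ W^{1,1}_loc(ℝ), continuous, with θ(0)=0 and |{s : θ(s) > 0, θ'(s) = 0}| = 0, such that θ'(E(w)−E(φ))·g(w) ≥ 1 for all w in U_ε = B(φ,ε) ∩ {E(·) > E(φ)} ∩ {θ'(E(·)−E(φ)) > 0}, then v has finite length and lim_{t→∞} v(t) = φ in M. -/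
open MeasureTheory Set Filter Topology Metric
open scoped ENNReal

noncomputable section

/-- An antitone function with nonzero derivative at each point of `S` is injective on `S`. -/
lemma stmt12_injOn {f f' : ℝ → ℝ} {S : Set ℝ}
    (hanti : Antitone f) (hd : ∀ x ∈ S, HasDerivAt f (f' x) x) (h0 : ∀ x ∈ S, f' x ≠ 0) :
    Set.InjOn f S := by
  have key : ∀ a ∈ S, ∀ b ∈ S, f a = f b → a < b → False := by
    intro a ha b hb hab h
    have hconst : ∀ x ∈ Ioc a b, f x = f a :=
      fun x hx => le_antisymm (hanti hx.1.le) (hab ▸ hanti hx.2)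
    have h1 : Tendsto (slope f a) (𝓝[>] a) (𝓝 (f' a)) :=
      (hasDerivAt_iff_tendsto_slope.mp (hd a ha)).mono_left
        (nhdsWithin_mono _ (fun x hx => ne_of_gt hx))
    have h2 : Tendsto (slope f a) (𝓝[>] a) (𝓝 0) := by
      refine Tendsto.congr' ?_ tendsto_const_nhds
      filter_upwards [Ioc_mem_nhdsGT h] with x hx
      simp [slope_def_field, hconst x hx]
    exact h0 a ha (tendsto_nhds_unique h1 h2)
  intro a ha b hb hab
  rcases lt_trichotomy a b with h | h | h
  · exact absurd h (fun h => key a ha b hb hab h)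
  · exact h
  · exact absurd h (fun h => key b hb a ha hab.symm h)

/-- If an antitone function has nonzero derivative on a measurable set whose image is null,
then the set is null. -/
lemma stmt12_null_of_null_image {f f' : ℝ → ℝ} {S : Set ℝ}
    (hanti : Antitone f) (hS : MeasurableSet S)
    (hd : ∀ x ∈ S, HasDerivAt f (f' x) x) (h0 : ∀ x ∈ S, f' x ≠ 0)
    (hmeas : Measurable f') (himg : volume (f '' S) = 0) : volume S = 0 := by
  have hinj := stmt12_injOn hanti hd h0
  have hder : ∀ x ∈ S, HasFDerivWithinAt f ((1 : ℝ →L[ℝ] ℝ).smulRight (f' x)) S x :=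
    fun x hx => ((hd x hx).hasDerivWithinAt).hasFDerivWithinAt
  have hcov := lintegral_image_eq_lintegral_abs_det_fderiv_mul volume hS hder hinj (fun _ => 1)
  simp only [ContinuousLinearMap.det_smulRight, ContinuousLinearMap.one_apply, one_mul, mul_one, lintegral_one, Measure.restrict_apply_univ] at hcov
  rw [himg] at hcov
  have hm : Measurable fun x => ENNReal.ofReal |f' x| :=
    (hmeas.abs).ennreal_ofReal
  have h2 : (fun x => ENNReal.ofReal |f' x|) =ᶠ[ae (volume.restrict S)] 0 :=
    (lintegral_eq_zero_iff hm).mp hcov.symm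
  have h3 : ∀ᵐ x ∂volume, x ∈ S → ENNReal.ofReal |f' x| = 0 := (ae_restrict_iff' hS).mp h2
  rw [MeasureTheory.ae_iff] at h3
  refine measure_mono_null (fun x hx => ?_) h3
  simp only [mem_setOf_eq, not_forall]
  refine ⟨hx, ?_⟩
  simp only [ENNReal.ofReal_eq_zero, not_le, abs_pos]
  exact h0 x hx

/-- The a.e. density of a monotone absolutely continuous function is a.e. nonnegative. -/
lemma stmt12_thetad_nonneg {θ θd : ℝ → ℝ} (hθmono : Monotone θ)
    (hθint : ∀ c d : ℝ, IntegrableOn θd (Icc c d))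
    (hθftc : ∀ x y : ℝ, θ y - θ x = ∫ r in x..y, θd r) :
    ∀ᵐ s, 0 ≤ θd s := by
  have hloc : LocallyIntegrable θd volume := fun x =>
    ⟨Icc (x - 1) (x + 1), Icc_mem_nhds (by linarith) (by linarith), hθint _ _⟩
  filter_upwards [IsUnifLocDoublingMeasure.ae_tendsto_average (volume : Measure ℝ) hloc 1]
    with x hx
  have h := hx (fun _ : ℝ => x) id tendsto_id ?_
  · refine ge_of_tendsto h ?_
    filter_upwards [self_mem_nhdsWithin] with r hr
    have hr' : (0:ℝ) < r := hr
    simp only [id] at *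
    rw [setAverage_eq]
    refine smul_nonneg (by positivity) ?_
    rw [Real.closedBall_eq_Icc, integral_Icc_eq_integral_Ioc,
      ← intervalIntegral.integral_of_le (by linarith), ← hθftc]
    have := hθmono (show x - r ≤ x + r by linarith)
    linarith
  · filter_upwards [self_mem_nhdsWithin] with r hr
    have hr' : (0:ℝ) < r := hr
    exact mem_closedBall_self (by simpa using by linarith : (0:ℝ) ≤ 1 * r)

set_option maxHeartbeats 1000000

/-- Trend to equilibrium in the metric sense: if the ω-limit point
`φ` of a `p`-gradient flow `v` is an equilibrium point, `E` is lsc on the closure of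
the trajectory, the ball `B(φ,ε)` satisfies the Sard-type condition, and `E` satisfies
a Kurdyka–Łojasiewicz inequality on
`U_ε = B(φ,ε) ∩ [E(·|φ) > 0] ∩ [θ'(E(·|φ)) > 0]`, then `v` has finite length and
`v(t) → φ` as `t → ∞`. -/
theorem stmt12 {X : Type*} [MetricSpace X] [CompleteSpace X]
    (E : X → EReal) (g : X → ℝ≥0∞)
    (hproper : ∃ x, E x ≠ ⊤) (hbot : ∀ x, E x ≠ ⊥)
    (hsug : StrongUpperGradient E g)
    (p : ℝ) (hp : 1 < p) (v : ℝ → X) (md : ℝ → ℝ)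
    (hflow : IsPGradientFlow E g p ⊤ v md)
    (tb : ℝ) (htb : 0 ≤ tb)
    (hlsc : LowerSemicontinuousOn E (closure (v '' Ici tb)))
    (φ : X)
    (hφω : ∃ tn : ℕ → ℝ, Tendsto tn atTop atTop ∧
      Tendsto (fun n => v (tn n)) atTop (nhds φ))
    (hφ : g φ = 0) (hφE : E φ ≠ ⊤)
    (ε : ℝ) (hε : 0 < ε)
    (hsard : ∀ w ∈ Metric.ball φ ε, E φ < E w → 0 < g w)
    (θ θd : ℝ → ℝ) (hθmono : StrictMono θ) (hθ0 : θ 0 = 0) (hθc : Continuous θ)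
    (hθint : ∀ c d : ℝ, IntegrableOn θd (Icc c d))
    (hθftc : ∀ x y : ℝ, θ y - θ x = ∫ r in x..y, θd r)
    (hθnull : volume {s : ℝ | 0 < θ s ∧ θd s = 0} = 0)
    (hKL : ∀ w ∈ Metric.ball φ ε, E φ < E w → E w ≠ ⊤ →
      0 < θd ((E w - E φ).toReal) →
      1 ≤ ENNReal.ofReal (θd ((E w - E φ).toReal)) * g w) :
    (∀ t₀ : ℝ, 0 < t₀ → (∫⁻ r in Ioi t₀, ENNReal.ofReal (md r)) < ⊤) ∧
      Tendsto v atTop (nhds φ) := by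
  classical
  obtain ⟨hmd0', hint', hdist', -, hfin', hanti', hae'⟩ := hflow
  have hITo : ITo (⊤ : EReal) = Ioi 0 := by
    ext x; simp [ITo, EReal.coe_lt_top]
  rw [hITo] at hmd0' hfin' hanti' hae'
  have hmd0 : ∀ x : ℝ, 0 < x → 0 ≤ md x := fun x hx => hmd0' x hx
  have hint : ∀ c d : ℝ, 0 < c → c ≤ d → IntegrableOn md (Ioc c d) :=
    fun c d h1 h2 => hint' c d h1 h2 (EReal.coe_lt_top d)
  have hdist : ∀ s t : ℝ, 0 < s → s ≤ t → dist (v s) (v t) ≤ ∫ r in s..t, md r :=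
    fun s t h1 h2 => hdist' s t h1 h2 (EReal.coe_lt_top t)
  set e : ℝ → ℝ := fun s => (E (v s)).toReal with he
  set c : ℝ := (E φ).toReal with hc
  set D' : ℝ → ℝ := deriv e with hD'
  have hD'meas : Measurable D' := measurable_deriv e
  set P : ℝ → Prop := fun t => HasDerivAt e (D' t) t ∧ D' t ≤ 0 ∧
      g (v t) ^ (p / (p - 1)) / ENNReal.ofReal (p / (p - 1)) + ENNReal.ofReal (md t ^ p / p)
        ≤ ENNReal.ofReal (-D' t) with hP
  have haeP : ∀ᵐ t ∂(volume.restrict (Ioi (0:ℝ))), P t := by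
    filter_upwards [hae'] with t ht
    obtain ⟨D, h1, h2, h3⟩ := ht
    have hDe : D' t = D := h1.deriv
    exact ⟨hDe ▸ h1, hDe ▸ h2, hDe ▸ h3⟩
  obtain ⟨Z₀, hZ₀m, hZ₀0, hZ₀P⟩ :
      ∃ Z : Set ℝ, MeasurableSet Z ∧ volume Z = 0 ∧ ∀ t ∈ Ioi (0:ℝ) \ Z, P t := by
    have h := (ae_restrict_iff' measurableSet_Ioi).mp haeP
    rw [MeasureTheory.ae_iff] at h
    refine ⟨toMeasurable volume {t | ¬ (t ∈ Ioi (0:ℝ) → P t)}, measurableSet_toMeasurable _ _,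
      by rw [measure_toMeasurable]; exact h, ?_⟩
    intro t ht
    by_contra hPt
    exact ht.2 (subset_toMeasurable _ _ (fun himp => hPt (himp ht.1)))
  have hanti : AntitoneOn e (Ioi 0) := hanti'
  have hebar : ∀ q : ℝ, 0 < q → Antitone (fun r => e (max r q)) := by
    intro q hq r1 r2 h12
    exact hanti (lt_of_lt_of_le hq (le_max_right _ _)) (lt_of_lt_of_le hq (le_max_right _ _))
      (max_le_max h12 le_rfl)
  have hmdzero : ∀ t : ℝ, 0 < t → D' t = 0 →
      g (v t) ^ (p / (p - 1)) / ENNReal.ofReal (p / (p - 1)) + ENNReal.ofReal (md t ^ p / p)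
        ≤ ENNReal.ofReal (-D' t) → md t = 0 := by
    intro t ht hD0 hineq
    rw [hD0] at hineq
    simp only [neg_zero, ENNReal.ofReal_zero, nonpos_iff_eq_zero, add_eq_zero] at hineq
    have h1 : md t ^ p / p ≤ 0 := by
      have := hineq.2
      rwa [ENNReal.ofReal_eq_zero] at this
    by_contra hne
    have hpos : 0 < md t := lt_of_le_of_ne (hmd0 t ht) (Ne.symm hne)
    have hp0 : (0:ℝ) < p := by linarith
    have : 0 < md t ^ p / p := by
      have := Real.rpow_pos_of_pos hpos p
      positivity
    linarith
  have hL1 : ∀ q : ℝ, 0 < q → ∀ N : Set ℝ, volume N = 0 →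
      volume {r | r ∈ Ioi q \ Z₀ ∧ D' r ≠ 0 ∧ e r - c ∈ N} = 0 := by
    intro q hq N hN
    set f : ℝ → ℝ := fun r => e (max r q) - c with hf
    have hfanti : Antitone f := fun a b hab => sub_le_sub_right (hebar q hq hab) c
    set Nm := toMeasurable volume N with hNm
    set S := ((Ioi q \ Z₀) ∩ {r | D' r ≠ 0}) ∩ f ⁻¹' Nm with hS
    have hSm : MeasurableSet S :=
      (((measurableSet_Ioi.diff hZ₀m).inter
        (hD'meas (measurableSet_singleton (0:ℝ)).compl)).inter
        (hfanti.measurable (measurableSet_toMeasurable _ _)))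
    have hSsub : S ⊆ Ioi q := fun x hx => hx.1.1.1
    have hfd : ∀ x ∈ S, HasDerivAt f (D' x) x := by
      intro x hx
      have hxq : q < x := hSsub hx
      have hPx := hZ₀P x ⟨lt_trans hq hxq, hx.1.1.2⟩
      have hev : f =ᶠ[𝓝 x] (fun r => e r - c) := by
        filter_upwards [Ioi_mem_nhds hxq] with r hr
        simp [hf, max_eq_left (le_of_lt (mem_Ioi.mp hr))]
      exact (hev.hasDerivAt_iff).mpr (hPx.1.sub_const c)
    have h0 : ∀ x ∈ S, D' x ≠ 0 := fun x hx => hx.1.2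
    have himg : volume (f '' S) = 0 := by
      have hsub : f '' S ⊆ Nm := by
        rintro - ⟨x, hx, rfl⟩
        exact hx.2
      have hNm0 : volume Nm = 0 := by rw [hNm]; rw [measure_toMeasurable]; exact hN
      exact measure_mono_null hsub hNm0
    have hSnull : volume S = 0 := stmt12_null_of_null_image hfanti hSm hfd h0 hD'meas himg
    refine measure_mono_null ?_ hSnull
    rintro r ⟨hr1, hr2, hr3⟩
    refine ⟨⟨hr1, hr2⟩, ?_⟩
    have hmax : max r q = r := max_eq_left (le_of_lt hr1.1)
    show f r ∈ Nm
    rw [hf]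
    simp only [hmax]
    exact subset_toMeasurable _ _ hr3
  obtain ⟨tn, htn, htnconv⟩ := hφω
  have hφmem : φ ∈ closure (v '' Ici tb) := by
    apply mem_closure_of_tendsto htnconv
    filter_upwards [htn.eventually_ge_atTop tb] with n hn
    exact mem_image_of_mem v hn
  have hEφ : E φ = ((c : ℝ) : EReal) := (EReal.coe_toReal hφE (hbot φ)).symm
  have hEfin : ∀ t : ℝ, 0 < t → E (v t) = ((e t : ℝ) : EReal) :=
    fun t ht => (EReal.coe_toReal (hfin' t ht).1 (hfin' t ht).2).symm
  have hlscseq : ∀ y : ℝ, (y : EReal) < E φ → ∀ᶠ n in atTop, y < e (tn n) := by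
    intro y hy
    have h1 := hlsc φ hφmem (y : EReal) hy
    have h2 : Tendsto (fun n => v (tn n)) atTop (𝓝[closure (v '' Ici tb)] φ) := by
      rw [tendsto_nhdsWithin_iff]
      refine ⟨htnconv, ?_⟩
      filter_upwards [htn.eventually_ge_atTop tb] with n hn
      exact subset_closure (mem_image_of_mem v hn)
    filter_upwards [h2.eventually h1, htn.eventually_gt_atTop 0] with n hn hn0
    rw [hEfin _ hn0] at hn
    exact_mod_cast hn
  have hbdd : BddBelow (range fun r => e (max r 1)) := by
    by_contra hb
    obtain ⟨x, ⟨r, hr⟩, hx⟩ := (not_bddBelow_iff.mp hb) (c - 1)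
    have hy : ((c - 1 : ℝ) : EReal) < E φ := by
      rw [hEφ]; exact_mod_cast (by linarith : c - 1 < c)
    obtain ⟨n, hn1, hn2⟩ := ((hlscseq _ hy).and (htn.eventually_ge_atTop (max r 1))).exists
    have hmax1 : (0:ℝ) < max r 1 := lt_of_lt_of_le one_pos (le_max_right _ _)
    have h3 : e (tn n) ≤ e (max r 1) := hanti hmax1 (lt_of_lt_of_le hmax1 hn2) hn2
    rw [show e (max r 1) = x from hr] at h3
    linarith
  set l : ℝ := ⨅ r, e (max r 1) with hldef
  have hebtend : Tendsto (fun r => e (max r 1)) atTop (𝓝 l) :=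
    tendsto_atTop_ciInf (hebar 1 one_pos) hbdd
  have hetend : Tendsto e atTop (𝓝 l) := by
    apply hebtend.congr'
    filter_upwards [eventually_ge_atTop (1:ℝ)] with r hr
    simp [max_eq_left hr]
  have hele : ∀ t : ℝ, 0 < t → l ≤ e t := by
    intro t ht
    apply le_of_tendsto hetend
    filter_upwards [eventually_ge_atTop t] with r hr
    exact hanti ht (lt_of_lt_of_le ht hr) hr
  have hcle : c ≤ l := by
    by_contra h
    push_neg at h
    set y := (l + c) / 2 with hy
    have hy1 : l < y := by rw [hy]; linarith
    have hy2 : y < c := by rw [hy]; linarith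
    have hyE : (y : EReal) < E φ := by rw [hEφ]; exact_mod_cast hy2
    have htne : Tendsto (fun n => e (tn n)) atTop (𝓝 l) := hetend.comp htn
    have : y ≤ l := ge_of_tendsto htne ((hlscseq y hyE).mono fun n hn => hn.le)
    linarith
  by_cases hcase : ∃ t1 : ℝ, 0 < t1 ∧ e t1 ≤ c
  · -- Case 1 : the energy reaches its limit value ; the flow is eventually constant.
    obtain ⟨t1, ht1, het1⟩ := hcase
    have heconst : ∀ t, t1 ≤ t → e t = c := by
      intro t ht
      have h1 : e t ≤ e t1 := hanti ht1 (lt_of_lt_of_le ht1 ht) ht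
      have h2 := hele t (lt_of_lt_of_le ht1 ht)
      linarith
    have hmd0ae : ∀ᵐ r ∂(volume.restrict (Ioi t1)), md r = 0 := by
      have hsub : Ioi t1 ⊆ Ioi (0:ℝ) := fun x hx => lt_trans ht1 hx
      have hPae : ∀ᵐ r ∂(volume.restrict (Ioi t1)), P r :=
        ae_restrict_of_ae_restrict_of_subset hsub haeP
      filter_upwards [hPae, ae_restrict_mem measurableSet_Ioi] with r hPr hr
      have hder0 : HasDerivAt e 0 r := by
        have hev : e =ᶠ[𝓝 r] fun _ => c := by
          filter_upwards [Ioi_mem_nhds hr] with x hx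
          exact heconst x (le_of_lt hx)
        exact (hev.hasDerivAt_iff).mpr (hasDerivAt_const r c)
      have hD0 : D' r = 0 := hPr.1.unique hder0
      exact hmdzero r (lt_trans ht1 hr) hD0 hPr.2.2
    have hIoit1 : ∫⁻ r in Ioi t1, ENNReal.ofReal (md r) = 0 := by
      have hz : (fun r => ENNReal.ofReal (md r)) =ᶠ[ae (volume.restrict (Ioi t1))] 0 :=
        hmd0ae.mono fun r hr => by simp [hr]
      rw [lintegral_congr_ae hz]; simp
    have hconstv : ∀ s, t1 < s → v s = v (t1 + 1) := by
      have key : ∀ a b : ℝ, t1 < a → a ≤ b → v a = v b := by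
        intro a b ha hab
        have h1 := hdist a b (lt_trans ht1 ha) hab
        have h2 : ∫ r in a..b, md r = 0 := by
          rw [intervalIntegral.integral_of_le hab]
          have hsub : Ioc a b ⊆ Ioi t1 := fun x hx => lt_trans ha hx.1
          have hz : md =ᶠ[ae (volume.restrict (Ioc a b))] fun _ => 0 :=
            ae_restrict_of_ae_restrict_of_subset hsub hmd0ae
          rw [integral_congr_ae hz, integral_zero]
        rw [h2] at h1
        exact dist_eq_zero.mp (le_antisymm h1 dist_nonneg)
      intro s hs
      rcases le_total s (t1 + 1) with h | h
      · exact key s (t1 + 1) hs h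
      · exact (key (t1 + 1) s (by linarith) h).symm
    have hφeq : φ = v (t1 + 1) := by
      refine tendsto_nhds_unique htnconv ?_
      refine Tendsto.congr' ?_ ((tendsto_const_nhds : Tendsto (fun _ : ℕ => v (t1+1)) atTop (𝓝 (v (t1+1)))))
      filter_upwards [htn.eventually_gt_atTop t1] with n hn
      exact (hconstv _ hn).symm
    constructor
    · intro t0 ht0
      have hm : (0:ℝ) < min t0 t1 := lt_min ht0 ht1
      have hsub : Ioi t0 ⊆ Ioc (min t0 t1) t1 ∪ Ioi t1 := by
        intro x hx
        rcases le_or_gt x t1 with h | h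
        · exact Or.inl ⟨lt_of_le_of_lt (min_le_left _ _) hx, h⟩
        · exact Or.inr h
      calc ∫⁻ r in Ioi t0, ENNReal.ofReal (md r)
          ≤ ∫⁻ r in Ioc (min t0 t1) t1 ∪ Ioi t1, ENNReal.ofReal (md r) := lintegral_mono_set hsub
        _ ≤ (∫⁻ r in Ioc (min t0 t1) t1, ENNReal.ofReal (md r)) +
              ∫⁻ r in Ioi t1, ENNReal.ofReal (md r) := lintegral_union_le _ _ _
        _ < ⊤ := by
            rw [hIoit1, add_zero]
            exact (hint (min t0 t1) t1 hm (min_le_right _ _)).lintegral_lt_top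
    · refine Tendsto.congr' ?_ ((tendsto_const_nhds : Tendsto (fun _ : ℝ => φ) atTop (𝓝 φ)))
      filter_upwards [eventually_gt_atTop t1] with t ht
      rw [hφeq]
      exact (hconstv t ht).symm
  · -- Case 2 : the energy stays strictly above its limit.
    push_neg at hcase
    have hloc : LocallyIntegrable θd volume := fun x =>
      ⟨Icc (x - 1) (x + 1), Icc_mem_nhds (by linarith) (by linarith), hθint _ _⟩
    have haem : AEMeasurable θd volume := hloc.aestronglyMeasurable.aemeasurable
    set θm : ℝ → ℝ := haem.mk θd with hθm
    have hmk : θd =ᵐ[volume] θm := haem.ae_eq_mk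
    have hθmmeas : Measurable θm := haem.measurable_mk
    have hθd0 : ∀ᵐ x, 0 ≤ θd x := stmt12_thetad_nonneg hθmono.monotone hθint hθftc
    set N0 : Set ℝ := {x | 0 < θ x ∧ θd x = 0} ∪ ({x | θd x < 0} ∪ {x | θd x ≠ θm x}) with hN0
    have hN0null : volume N0 = 0 := by
      refine measure_union_null hθnull (measure_union_null ?_ ?_)
      · have h := hθd0
        rw [MeasureTheory.ae_iff] at h
        simpa [not_le] using h
      · exact MeasureTheory.ae_iff.mp hmk
    have hpq : (p / (p - 1)).HolderConjugate p := by
      have h := (Real.HolderConjugate.conjExponent hp).symm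
      simpa [Real.conjExponent] using h
    -- The key length estimate via the KL inequality and a change of variables.
    have hKey : ∀ s t : ℝ, 0 < s → s ≤ t → (∀ r ∈ Icc s t, v r ∈ Metric.ball φ ε) →
        (∫⁻ r in Ioc s t, ENNReal.ofReal (md r)) ≤ ENNReal.ofReal (θ (e s - c) - θ (e t - c)) := by
      intro s t hs hst hball
      set q := s / 2 with hqdef
      have hq : 0 < q := by positivity
      have hqs : q < s := by rw [hqdef]; linarith
      -- a.e. pointwise bound
      have hae2 : ∀ᵐ r ∂(volume.restrict (Ioc s t)),
          ENNReal.ofReal (md r) ≤ ENNReal.ofReal (θm (e r - c)) * ENNReal.ofReal (-D' r) := by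
        have hB := hL1 q hq N0 hN0null
        have hBae : ∀ᵐ r ∂(volume.restrict (Ioc s t)),
            ¬ (r ∈ Ioi q \ Z₀ ∧ D' r ≠ 0 ∧ e r - c ∈ N0) := by
          apply ae_restrict_of_ae
          rw [MeasureTheory.ae_iff]
          refine measure_mono_null ?_ hB
          intro a ha
          exact not_not.mp ha
        have hZae : ∀ᵐ r ∂(volume.restrict (Ioc s t)), r ∉ Z₀ := by
          apply ae_restrict_of_ae
          rw [MeasureTheory.ae_iff]
          refine measure_mono_null ?_ hZ₀0
          intro a ha
          exact not_not.mp ha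
        filter_upwards [hBae, hZae, ae_restrict_mem measurableSet_Ioc] with r hnB hnZ hr
        have hr0 : (0:ℝ) < r := lt_trans hs hr.1
        have hrq : r ∈ Ioi q := by simp only [mem_Ioi]; linarith [hr.1]
        obtain ⟨hder, hDle, hineq⟩ := hZ₀P r ⟨hr0, hnZ⟩
        by_cases hD0 : D' r = 0
        · have hmd : md r = 0 := hmdzero r hr0 hD0 hineq
          simp [hmd]
        · have hnN : e r - c ∉ N0 := fun h => hnB ⟨⟨hrq, hnZ⟩, hD0, h⟩
          have hposdiff : 0 < e r - c := by linarith [hcase r hr0]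
          have hθpos : 0 < θd (e r - c) := by
            rcases lt_trichotomy (θd (e r - c)) 0 with h | h | h
            · exact absurd (Or.inr (Or.inl h)) hnN
            · exfalso
              apply hnN
              left
              refine ⟨?_, h⟩
              rw [← hθ0]
              exact hθmono hposdiff
            · exact h
          have hθeq : θd (e r - c) = θm (e r - c) := by
            by_contra h
            exact hnN (Or.inr (Or.inr h))
          have hball_r : v r ∈ Metric.ball φ ε := hball r ⟨hr.1.le, hr.2⟩
          have hElt : E φ < E (v r) := by
            rw [hEfin r hr0, hEφ]
            exact_mod_cast hcase r hr0
          have hEtop : E (v r) ≠ ⊤ := (hfin' r hr0).1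
          have htoReal : (E (v r) - E φ).toReal = e r - c := by
            rw [EReal.toReal_sub hEtop (hbot _) hφE (hbot φ)]
          have hKL1 : 1 ≤ ENNReal.ofReal (θd (e r - c)) * g (v r) := by
            have h := hKL (v r) hball_r hElt hEtop (by rw [htoReal]; exact hθpos)
            rwa [htoReal] at h
          have hyoung : g (v r) * ENNReal.ofReal (md r) ≤
              g (v r) ^ (p / (p - 1)) / ENNReal.ofReal (p / (p - 1)) +
                ENNReal.ofReal (md r ^ p / p) := by
            have h := ENNReal.young_inequality (g (v r)) (ENNReal.ofReal (md r)) hpq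
            rwa [ENNReal.ofReal_rpow_of_nonneg (hmd0 r hr0) (by linarith : (0:ℝ) ≤ p),
              ← ENNReal.ofReal_div_of_pos (by linarith : (0:ℝ) < p)] at h
          calc ENNReal.ofReal (md r)
              ≤ (ENNReal.ofReal (θd (e r - c)) * g (v r)) * ENNReal.ofReal (md r) :=
                le_mul_of_one_le_left zero_le hKL1
            _ = ENNReal.ofReal (θd (e r - c)) * (g (v r) * ENNReal.ofReal (md r)) :=
                mul_assoc _ _ _
            _ ≤ ENNReal.ofReal (θd (e r - c)) * ENNReal.ofReal (-D' r) :=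
                mul_le_mul_right (le_trans hyoung hineq) _
            _ = ENNReal.ofReal (θm (e r - c)) * ENNReal.ofReal (-D' r) := by rw [hθeq]
      -- split the domain and change variables
      set S := (Ioc s t \ Z₀) ∩ {r | D' r ≠ 0} with hS
      have hSm : MeasurableSet S :=
        (measurableSet_Ioc.diff hZ₀m).inter (hD'meas (measurableSet_singleton (0:ℝ)).compl)
      set f : ℝ → ℝ := fun r => e (max r q) - c with hf
      have hfanti : Antitone f := fun a b hab => sub_le_sub_right (hebar q hq hab) c
      have hfd : ∀ x ∈ S, HasDerivAt f (D' x) x := by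
        intro x hx
        have hxs : s < x := hx.1.1.1
        have hx0 : (0:ℝ) < x := lt_trans hs hxs
        obtain ⟨hder, -, -⟩ := hZ₀P x ⟨hx0, hx.1.2⟩
        have hev : f =ᶠ[𝓝 x] (fun r => e r - c) := by
          filter_upwards [Ioi_mem_nhds (lt_trans hqs hxs)] with r hr
          simp [hf, max_eq_left (le_of_lt (mem_Ioi.mp hr))]
        exact (hev.hasDerivAt_iff).mpr (hder.sub_const c)
      have hinj : InjOn f S := stmt12_injOn hfanti hfd (fun x hx => hx.2)
      have hcov := lintegral_image_eq_lintegral_abs_det_fderiv_mul volume hSm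
        (fun x hx => (((hfd x hx).hasDerivWithinAt).hasFDerivWithinAt))
        hinj (fun σ => ENNReal.ofReal (θm σ))
      simp only [ContinuousLinearMap.det_toSpanSingleton] at hcov
      have hfeq : ∀ x ∈ S, f x = e x - c := by
        intro x hx
        have hxs : s < x := hx.1.1.1
        rw [hf]
        simp [max_eq_left (le_of_lt (lt_trans hqs hxs))]
      have hSbound : (∫⁻ r in S, ENNReal.ofReal (θm (e r - c)) * ENNReal.ofReal (-D' r))
          ≤ ENNReal.ofReal (θ (e s - c) - θ (e t - c)) := by
        have hstep : (∫⁻ r in S, ENNReal.ofReal (θm (e r - c)) * ENNReal.ofReal (-D' r))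
            = ∫⁻ x in f '' S, ENNReal.ofReal (θm x) := by
          rw [hcov]
          apply setLIntegral_congr_fun hSm
          intro x hx
          have hxs : s < x := hx.1.1.1
          have hx0 : (0:ℝ) < x := lt_trans hs hxs
          obtain ⟨-, hDle, -⟩ := hZ₀P x ⟨hx0, hx.1.2⟩
          beta_reduce
          rw [hfeq x hx, abs_of_nonpos hDle, mul_comm]
        rw [hstep]
        have himgsub : f '' S ⊆ Icc (e t - c) (e s - c) := by
          rintro - ⟨x, hx, rfl⟩
          have hx1 : x ∈ Ioc s t := hx.1.1
          have hx0 : (0:ℝ) < x := lt_trans hs hx1.1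
          rw [hfeq x hx]
          constructor
          · have : e t ≤ e x := hanti hx0 (lt_of_lt_of_le hx0 hx1.2) hx1.2
            linarith
          · have : e x ≤ e s := hanti hs hx0 hx1.1.le
            linarith
        refine le_trans (lintegral_mono_set himgsub) ?_
        have hets : e t ≤ e s := hanti hs (lt_of_lt_of_le hs hst) hst
        have hab : e t - c ≤ e s - c := by linarith
        have h1 : (∫⁻ σ in Icc (e t - c) (e s - c), ENNReal.ofReal (θm σ))
            = ∫⁻ σ in Icc (e t - c) (e s - c), ENNReal.ofReal (θd σ) :=
          lintegral_congr_ae (ae_restrict_of_ae (hmk.mono fun σ hσ => by simp only [hσ]))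
        rw [h1, ← ofReal_integral_eq_lintegral_ofReal (hθint _ _) (ae_restrict_of_ae hθd0)]
        apply le_of_eq
        congr 1
        rw [integral_Icc_eq_integral_Ioc, ← intervalIntegral.integral_of_le hab]
        exact (hθftc _ _).symm
      -- assemble
      have hsplit : Ioc s t ⊆ S ∪ ((Ioc s t ∩ Z₀) ∪ (Ioc s t ∩ {r | D' r = 0})) := by
        intro x hx
        by_cases h1 : x ∈ Z₀
        · exact Or.inr (Or.inl ⟨hx, h1⟩)
        by_cases h2 : D' x = 0
        · exact Or.inr (Or.inr ⟨hx, h2⟩)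
        · exact Or.inl ⟨⟨hx, h1⟩, h2⟩
      have hZ0int : (∫⁻ r in Ioc s t ∩ Z₀,
          ENNReal.ofReal (θm (e r - c)) * ENNReal.ofReal (-D' r)) = 0 :=
        setLIntegral_measure_zero _ _ (measure_mono_null inter_subset_right hZ₀0)
      have hD0int : (∫⁻ r in Ioc s t ∩ {r | D' r = 0},
          ENNReal.ofReal (θm (e r - c)) * ENNReal.ofReal (-D' r)) = 0 := by
        have hmeas : MeasurableSet (Ioc s t ∩ {r | D' r = 0}) :=
          measurableSet_Ioc.inter (hD'meas (measurableSet_singleton (0:ℝ)))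
        have hzero : ∀ x ∈ Ioc s t ∩ {r | D' r = 0},
            ENNReal.ofReal (θm (e x - c)) * ENNReal.ofReal (-D' x) = (fun _ => (0:ℝ≥0∞)) x := by
          intro x hx
          have hx2 : D' x = 0 := hx.2
          simp [hx2]
        rw [setLIntegral_congr_fun hmeas hzero]
        simp
      calc (∫⁻ r in Ioc s t, ENNReal.ofReal (md r))
          ≤ ∫⁻ r in Ioc s t, ENNReal.ofReal (θm (e r - c)) * ENNReal.ofReal (-D' r) :=
            lintegral_mono_ae hae2
        _ ≤ ∫⁻ r in S ∪ ((Ioc s t ∩ Z₀) ∪ (Ioc s t ∩ {r | D' r = 0})),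
              ENNReal.ofReal (θm (e r - c)) * ENNReal.ofReal (-D' r) :=
            lintegral_mono_set hsplit
        _ ≤ (∫⁻ r in S, ENNReal.ofReal (θm (e r - c)) * ENNReal.ofReal (-D' r)) +
              ((∫⁻ r in Ioc s t ∩ Z₀, ENNReal.ofReal (θm (e r - c)) * ENNReal.ofReal (-D' r)) +
                ∫⁻ r in Ioc s t ∩ {r | D' r = 0},
                  ENNReal.ofReal (θm (e r - c)) * ENNReal.ofReal (-D' r)) :=
            le_trans (lintegral_union_le _ _ _) (by gcongr; exact lintegral_union_le _ _ _)
        _ ≤ ENNReal.ofReal (θ (e s - c) - θ (e t - c)) := by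
            rw [hZ0int, hD0int, add_zero, add_zero]
            exact hSbound
    -- metric version of the key estimate
    have hDist : ∀ s t : ℝ, 0 < s → s ≤ t → (∀ r ∈ Icc s t, v r ∈ Metric.ball φ ε) →
        dist (v s) (v t) ≤ θ (e s - c) - θ (e t - c) := by
      intro s t hs hst hball
      have h1 := hdist s t hs hst
      have h3 := hKey s t hs hst hball
      have hets : e t ≤ e s := hanti hs (lt_of_lt_of_le hs hst) hst
      have hnn : 0 ≤ θ (e s - c) - θ (e t - c) := by
        have := hθmono.monotone (show e t - c ≤ e s - c by linarith)
        linarith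
      have h2 : ∫ r in s..t, md r = (∫⁻ r in Ioc s t, ENNReal.ofReal (md r)).toReal := by
        rw [intervalIntegral.integral_of_le hst]
        exact integral_eq_lintegral_of_nonneg_ae
          ((ae_restrict_iff' measurableSet_Ioc).mpr
            (ae_of_all _ fun r hr => hmd0 r (lt_trans hs hr.1)))
          (hint s t hs hst).aestronglyMeasurable
      have h4 : (∫⁻ r in Ioc s t, ENNReal.ofReal (md r)).toReal ≤ θ (e s - c) - θ (e t - c) := by
        have h5 := ENNReal.toReal_mono ENNReal.ofReal_ne_top h3
        rwa [ENNReal.toReal_ofReal hnn] at h5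
      rw [h2] at h1
      linarith
    -- choice of the base time
    have htconv : Tendsto (fun n => θ (e (tn n) - c)) atTop (𝓝 (θ (l - c))) := by
      have h1 : Tendsto (fun n => e (tn n) - c) atTop (𝓝 (l - c)) :=
        (hetend.comp htn).sub_const c
      exact (hθc.tendsto _).comp h1
    have hdconv : Tendsto (fun n => dist (v (tn n)) φ) atTop (𝓝 0) :=
      tendsto_iff_dist_tendsto_zero.mp htnconv
    obtain ⟨n0, hn0a, hn0b⟩ : ∃ n, 0 < tn n ∧
        dist (v (tn n)) φ + (θ (e (tn n) - c) - θ (l - c)) < ε / 2 := by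
      have h1 : Tendsto (fun n => dist (v (tn n)) φ + (θ (e (tn n) - c) - θ (l - c)))
          atTop (𝓝 0) := by
        have h2 := hdconv.add (htconv.sub_const (θ (l - c)))
        simpa using h2
      exact ((htn.eventually_gt_atTop 0).and (h1.eventually_lt_const (by positivity))).exists
    set ts := tn n0 with htsdef
    have hts0 : 0 < ts := hn0a
    set Θ := θ (e ts - c) - θ (l - c) with hΘdef
    set γ := ε / 2 - (dist (v ts) φ + Θ) with hγdef
    have hγ : 0 < γ := by rw [hγdef]; linarith [hn0b]
    have hθlb : ∀ t, 0 < t → θ (l - c) ≤ θ (e t - c) :=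
      fun t ht => hθmono.monotone (by linarith [hele t ht])
    have hΘ0 : 0 ≤ Θ := by rw [hΘdef]; linarith [hθlb ts hts0]
    have hθlc0 : 0 ≤ θ (l - c) := by
      rw [← hθ0]
      exact hθmono.monotone (by linarith [hcle])
    -- continuity of v on [ts, ∞)
    have hII : ∀ a b : ℝ, 0 < a → 0 < b → IntervalIntegrable md volume a b := by
      intro a b ha hb
      rw [intervalIntegrable_iff]
      exact (hint (min a b) (max a b) (lt_min ha hb) min_le_max).mono_set
        (by rw [Set.uIoc])
    have hvc : ∀ t ∈ Ici ts, ContinuousWithinAt v (Ici ts) t := by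
      intro t ht
      have ht' : ts ≤ t := ht
      have htpos : 0 < t := lt_of_lt_of_le hts0 ht
      set b := t + 1 with hb
      have hIccInt : IntegrableOn md (Icc ts b) := by
        apply (hint (ts/2) b (by positivity) (by rw [hb]; linarith [ht'])).mono_set
        intro x hx
        exact ⟨lt_of_lt_of_le (by linarith) hx.1, hx.2⟩
      have hΦ : ContinuousOn (fun x => ∫ u in Icc ts x, md u) (Icc ts b) :=
        intervalIntegral.continuousOn_primitive_Icc hIccInt
      have hΦt := hΦ t ⟨ht, by rw [hb]; linarith⟩
      rw [Metric.continuousWithinAt_iff] at hΦt ⊢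
      intro ε' hε'
      obtain ⟨δ, hδ, hδP⟩ := hΦt ε' hε'
      refine ⟨min δ 1, lt_min hδ one_pos, ?_⟩
      intro x hx hxd
      have hxd1 : dist x t < 1 := lt_of_lt_of_le hxd (min_le_right _ _)
      have hxdδ : dist x t < δ := lt_of_lt_of_le hxd (min_le_left _ _)
      have hxb : x ∈ Icc ts b := by
        refine ⟨hx, ?_⟩
        have hxd1' : |x - t| < 1 := by rwa [Real.dist_eq] at hxd1
        have h6 := abs_lt.mp hxd1'
        rw [hb]
        linarith [h6.1, h6.2]
      have hΦd := hδP hxb hxdδ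
      have hkey : ∀ x1 y1 : ℝ, ts ≤ x1 → x1 ≤ y1 → y1 ≤ b →
          dist (v x1) (v y1) ≤ (∫ u in Icc ts y1, md u) - ∫ u in Icc ts x1, md u := by
        intro x1 y1 hx1 hxy1 hy1
        have hx1p : 0 < x1 := lt_of_lt_of_le hts0 hx1
        have h1 := hdist x1 y1 hx1p hxy1
        have h2 : (∫ u in Icc ts y1, md u) - (∫ u in Icc ts x1, md u) = ∫ u in x1..y1, md u := by
          have e1 : ∫ u in Icc ts x1, md u = ∫ u in ts..x1, md u := by
            rw [intervalIntegral.integral_of_le hx1, integral_Icc_eq_integral_Ioc]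
          have e2 : ∫ u in Icc ts y1, md u = ∫ u in ts..y1, md u := by
            rw [intervalIntegral.integral_of_le (le_trans hx1 hxy1), integral_Icc_eq_integral_Ioc]
          rw [e1, e2, ← intervalIntegral.integral_add_adjacent_intervals
            (hII ts x1 hts0 hx1p) (hII x1 y1 hx1p (lt_of_lt_of_le hx1p hxy1))]
          ring
        rw [h2]
        exact h1
      rcases le_total x t with hxt | hxt
      · have h7 := hkey x t hx hxt (by rw [hb]; linarith)
        calc dist (v x) (v t) ≤ (∫ u in Icc ts t, md u) - ∫ u in Icc ts x, md u := h7
          _ ≤ |(∫ u in Icc ts t, md u) - ∫ u in Icc ts x, md u| := le_abs_self _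
          _ = dist (∫ u in Icc ts x, md u) (∫ u in Icc ts t, md u) := by
              rw [Real.dist_eq, abs_sub_comm]
          _ < ε' := hΦd
      · have h7 := hkey t x ht hxt hxb.2
        calc dist (v x) (v t) = dist (v t) (v x) := dist_comm _ _
          _ ≤ (∫ u in Icc ts x, md u) - ∫ u in Icc ts t, md u := h7
          _ ≤ |(∫ u in Icc ts x, md u) - ∫ u in Icc ts t, md u| := le_abs_self _
          _ = dist (∫ u in Icc ts x, md u) (∫ u in Icc ts t, md u) := by rw [Real.dist_eq]
          _ < ε' := hΦd
    -- the trajectory stays in the ball of radius ε/2 after time ts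
    have hstart : dist (v ts) φ ≤ ε / 2 - γ - Θ := by rw [hγdef]; linarith
    have hstay : ∀ t1, ts ≤ t1 → ∀ r ∈ Icc ts t1, dist (v r) φ ≤ ε / 2 := by
      intro t1 ht1
      set B := {t' | t' ∈ Icc ts t1 ∧ ∀ r ∈ Icc ts t', dist (v r) φ ≤ ε / 2} with hB
      have htsB : ts ∈ B := by
        refine ⟨⟨le_refl _, ht1⟩, ?_⟩
        intro r hr
        have : r = ts := le_antisymm hr.2 hr.1
        rw [this]
        linarith [hstart, hγ, hΘ0]
      have hBne : B.Nonempty := ⟨ts, htsB⟩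
      have hBbdd : BddAbove B := ⟨t1, fun x hx => hx.1.2⟩
      set T := sSup B with hT
      have hTts : ts ≤ T := le_csSup hBbdd htsB
      have hTt1 : T ≤ t1 := csSup_le hBne (fun x hx => hx.1.2)
      have hTin : ∀ r ∈ Ico ts T, dist (v r) φ ≤ ε / 2 := by
        intro r hr
        obtain ⟨x, hxB, hrx⟩ := exists_lt_of_lt_csSup hBne hr.2
        exact hxB.2 r ⟨hr.1, hrx.le⟩
      have hTB : ∀ r ∈ Icc ts T, dist (v r) φ ≤ ε / 2 := by
        intro r hr
        rcases lt_or_eq_of_le hr.2 with h | h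
        · exact hTin r ⟨hr.1, h⟩
        rw [h]
        rcases eq_or_lt_of_le hTts with h2 | h2
        · rw [← h2]
          linarith [hstart, hγ, hΘ0]
        · have hne : (𝓝[Ico ts T] T).NeBot := by
            rw [nhdsWithin_Ico_eq_nhdsLT h2]
            infer_instance
          have hcont : Tendsto v (𝓝[Ico ts T] T) (𝓝 (v T)) :=
            (hvc T hTts).mono_left (nhdsWithin_mono _ (fun x hx => hx.1))
          have hd : Tendsto (fun u => dist (v u) φ) (𝓝[Ico ts T] T) (𝓝 (dist (v T) φ)) :=
            hcont.dist tendsto_const_nhds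
          refine le_of_tendsto hd ?_
          filter_upwards [eventually_mem_nhdsWithin] with u hu
          exact hTin u hu
      have hTim : ∀ r ∈ Icc ts T, dist (v r) φ ≤ ε / 2 - γ := by
        intro r hr
        rcases eq_or_lt_of_le hr.1 with h | h
        · rw [← h]
          linarith [hstart, hΘ0]
        · have hr0 : 0 < r := lt_trans hts0 h
          have hb2 : ∀ u ∈ Icc ts r, v u ∈ Metric.ball φ ε := by
            intro u hu
            rw [Metric.mem_ball]
            have := hTB u ⟨hu.1, le_trans hu.2 hr.2⟩
            linarith
          have h2 := hDist ts r hts0 h.le hb2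
          have h3 := hθlb r hr0
          calc dist (v r) φ ≤ dist (v r) (v ts) + dist (v ts) φ := dist_triangle _ _ _
            _ ≤ Θ + dist (v ts) φ := by
                rw [dist_comm]
                rw [hΘdef]
                linarith
            _ ≤ ε / 2 - γ := by rw [hγdef]; linarith
      rcases eq_or_lt_of_le hTt1 with hT1 | hT1
      · intro r hr
        exact hTB r (by rw [← hT1] at hr; exact hr)
      · exfalso
        obtain ⟨δ, hδ, hδP⟩ := Metric.continuousWithinAt_iff.mp (hvc T hTts) γ hγ
        set T' := min t1 (T + δ / 2) with hT'
        have hTT' : T < T' := lt_min hT1 (by linarith)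
        have hT'B : T' ∈ B := by
          refine ⟨⟨le_trans hTts hTT'.le, min_le_left _ _⟩, ?_⟩
          intro r hr
          rcases le_or_gt r T with h | h
          · exact hTB r ⟨hr.1, h⟩
          · have hrd : dist r T < δ := by
              rw [Real.dist_eq, abs_of_pos (by linarith)]
              have h8 : r ≤ T' := hr.2
              have h9 : T' ≤ T + δ / 2 := min_le_right _ _
              linarith
            have h10 := hδP hr.1 hrd
            have h11 := hTim T ⟨hTts, le_refl _⟩
            calc dist (v r) φ ≤ dist (v r) (v T) + dist (v T) φ := dist_triangle _ _ _
              _ ≤ γ + (ε / 2 - γ) := add_le_add h10.le h11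
              _ = ε / 2 := by ring
        have := le_csSup hBbdd hT'B
        rw [← hT] at this
        linarith [hTT']
    have hball2 : ∀ s t : ℝ, ts ≤ s → s ≤ t → ∀ r ∈ Icc s t, v r ∈ Metric.ball φ ε := by
      intro s t hs' hst r hr
      have := hstay t (le_trans hs' hst) r ⟨le_trans hs' hr.1, hr.2⟩
      rw [Metric.mem_ball]
      linarith
    -- tail estimate
    have htail : (∫⁻ r in Ioi ts, ENNReal.ofReal (md r)) ≤ ENNReal.ofReal (θ (e ts - c)) := by
      have hU : Ioi ts = ⋃ n : ℕ, Ioc (ts + (n:ℝ)) (ts + n + 1) := by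
        ext x
        simp only [mem_Ioi, mem_iUnion, mem_Ioc]
        constructor
        · intro hx
          have h1 : 0 < x - ts := by linarith
          have h2 : (1:ℕ) ≤ ⌈x - ts⌉₊ := Nat.one_le_ceil_iff.mpr h1
          have h3 : ((⌈x - ts⌉₊ - 1 : ℕ) : ℝ) = (⌈x - ts⌉₊ : ℝ) - 1 := by
            push_cast [h2]
            ring
          refine ⟨⌈x - ts⌉₊ - 1, ?_, ?_⟩
          · rw [h3]
            have := Nat.ceil_lt_add_one h1.le
            linarith
          · rw [h3]
            have := Nat.le_ceil (x - ts)
            linarith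
        · rintro ⟨n, h1, h2⟩
          have : (0:ℝ) ≤ n := Nat.cast_nonneg n
          linarith
      have hdisj : Pairwise (Function.onFun Disjoint fun n : ℕ => Ioc (ts + (n:ℝ)) (ts + n + 1)) := by
        intro m n hmn
        simp only [Function.onFun]
        rw [Set.Ioc_disjoint_Ioc]
        rcases hmn.lt_or_gt with h | h
        · have h5 : (m:ℝ) + 1 ≤ n := by exact_mod_cast h
          refine le_trans (min_le_left _ _) (le_trans ?_ (le_max_right _ _))
          linarith
        · have h5 : (n:ℝ) + 1 ≤ m := by exact_mod_cast h
          refine le_trans (min_le_right _ _) (le_trans ?_ (le_max_left _ _))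
          linarith
      rw [hU, lintegral_iUnion (fun n => measurableSet_Ioc) hdisj, ENNReal.tsum_eq_iSup_nat]
      refine iSup_le fun N => ?_
      have hpart : ∀ n : ℕ, (∫⁻ r in Ioc (ts + (n:ℝ)) (ts + n + 1), ENNReal.ofReal (md r))
          ≤ ENNReal.ofReal (θ (e (ts + (n:ℝ)) - c) - θ (e (ts + (n:ℝ) + 1) - c)) := by
        intro n
        have hn0 : (0:ℝ) ≤ n := Nat.cast_nonneg n
        exact hKey (ts + n) (ts + n + 1) (by linarith) (by linarith)
          (fun r hr => hball2 (ts + n) (ts + n + 1) (by linarith) (by linarith) r hr)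
      have hmono2 : ∀ n : ℕ, 0 ≤ θ (e (ts + (n:ℝ)) - c) - θ (e (ts + (n:ℝ) + 1) - c) := by
        intro n
        have hn0 : (0:ℝ) ≤ n := Nat.cast_nonneg n
        have h6 : e (ts + (n:ℝ) + 1) ≤ e (ts + (n:ℝ)) :=
          hanti (show (0:ℝ) < ts + (n:ℝ) by linarith)
            (show (0:ℝ) < ts + (n:ℝ) + 1 by linarith) (by linarith)
        have := hθmono.monotone (show e (ts + (n:ℝ) + 1) - c ≤ e (ts + (n:ℝ)) - c by linarith)
        linarith
      calc ∑ n ∈ Finset.range N, ∫⁻ r in Ioc (ts + (n:ℝ)) (ts + n + 1), ENNReal.ofReal (md r)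
          ≤ ∑ n ∈ Finset.range N,
              ENNReal.ofReal (θ (e (ts + (n:ℝ)) - c) - θ (e (ts + (n:ℝ) + 1) - c)) :=
            Finset.sum_le_sum fun n _ => hpart n
        _ = ENNReal.ofReal (∑ n ∈ Finset.range N,
              (θ (e (ts + (n:ℝ)) - c) - θ (e (ts + (n:ℝ) + 1) - c))) :=
            (ENNReal.ofReal_sum_of_nonneg fun n _ => hmono2 n).symm
        _ ≤ ENNReal.ofReal (θ (e ts - c)) := by
            apply ENNReal.ofReal_le_ofReal
            have htele : ∑ n ∈ Finset.range N,
                (θ (e (ts + (n:ℝ)) - c) - θ (e (ts + (n:ℝ) + 1) - c))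
                = θ (e (ts + ((0:ℕ):ℝ)) - c) - θ (e (ts + ((N:ℕ):ℝ)) - c) := by
              have h7 := Finset.sum_range_sub' (fun n : ℕ => θ (e (ts + (n:ℝ)) - c)) N
              rw [← h7]
              apply Finset.sum_congr rfl
              intro n _
              congr 3
              push_cast
              ring
            rw [htele]
            have hN0 : (0:ℝ) ≤ (N:ℝ) := Nat.cast_nonneg N
            have h8 := hθlb (ts + N) (by linarith)
            simp only [Nat.cast_zero, add_zero]
            linarith [hθlc0]
    constructor
    · intro t0 ht0
      have hm : (0:ℝ) < min t0 ts := lt_min ht0 hts0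
      have hsub : Ioi t0 ⊆ Ioc (min t0 ts) ts ∪ Ioi ts := by
        intro x hx
        rcases le_or_gt x ts with h | h
        · exact Or.inl ⟨lt_of_le_of_lt (min_le_left _ _) hx, h⟩
        · exact Or.inr h
      calc ∫⁻ r in Ioi t0, ENNReal.ofReal (md r)
          ≤ ∫⁻ r in Ioc (min t0 ts) ts ∪ Ioi ts, ENNReal.ofReal (md r) :=
            lintegral_mono_set hsub
        _ ≤ (∫⁻ r in Ioc (min t0 ts) ts, ENNReal.ofReal (md r)) +
              ∫⁻ r in Ioi ts, ENNReal.ofReal (md r) := lintegral_union_le _ _ _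
        _ < ⊤ := ENNReal.add_lt_top.mpr
            ⟨(hint _ _ hm (min_le_right _ _)).lintegral_lt_top,
              lt_of_le_of_lt htail ENNReal.ofReal_lt_top⟩
    · have hbound : ∀ t, ts ≤ t → dist (v t) φ ≤ θ (e t - c) - θ (l - c) := by
        intro t ht
        have ht0 : 0 < t := lt_of_lt_of_le hts0 ht
        have hlim : Tendsto (fun n => (θ (e t - c) - θ (e (tn n) - c)) + dist (v (tn n)) φ)
            atTop (𝓝 ((θ (e t - c) - θ (l - c)) + 0)) :=
          (((tendsto_const_nhds :
            Tendsto (fun _ : ℕ => θ (e t - c)) atTop (𝓝 (θ (e t - c)))).sub htconv).add hdconv)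
        rw [add_zero] at hlim
        refine ge_of_tendsto hlim ?_
        filter_upwards [htn.eventually_ge_atTop t] with n hn
        have h1 := hDist t (tn n) ht0 hn (hball2 t (tn n) ht hn)
        calc dist (v t) φ ≤ dist (v t) (v (tn n)) + dist (v (tn n)) φ := dist_triangle _ _ _
          _ ≤ (θ (e t - c) - θ (e (tn n) - c)) + dist (v (tn n)) φ := by linarith
      rw [tendsto_iff_dist_tendsto_zero]
      have hbd : ∀ᶠ t in atTop, dist (v t) φ ≤ θ (e t - c) - θ (l - c) := by
        filter_upwards [eventually_ge_atTop ts] with t ht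
        exact hbound t ht
      have h0 : Tendsto (fun t => θ (e t - c)) atTop (𝓝 (θ (l - c))) :=
        (hθc.tendsto _).comp (hetend.sub_const c)
      have h1 : Tendsto (fun t => θ (e t - c) - θ (l - c)) atTop
          (𝓝 (θ (l - c) - θ (l - c))) := h0.sub_const _
      rw [sub_self] at h1
      have hnn : ∀ᶠ t in (atTop : Filter ℝ), 0 ≤ dist (v t) φ :=
        Eventually.of_forall fun t => dist_nonneg
      exact squeeze_zero' hnn hbd h1
end
end

section
/- Let X be a real Banach space, U ⊆ X open, E : U → ℝ twice continuously Fréchet differentiable, and let φ ∈ U be a local minimum of E such that E''(φ) : X → X' is invertible (with bounded inverse). Then there exist δ > 0 and C > 0 such that for all v in the ball B(φ,δ): (i) C⁻¹‖v−φ‖_X ≤ ‖E'(v)‖_{X'} ≤ C‖v−φ‖_X, (ii) (E(v) − E(φ))^{1/2} ≤ C‖v−φ‖_X, and (iii) the Łojasiewicz–Simon inequality with exponent 1/2: (E(v) − E(φ))^{1/2} ≤ C‖E'(v)‖_{X'} holds. -/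
open MeasureTheory Set Filter Topology Metric
open scoped ENNReal

noncomputable section

private lemma stmt17_aux (M c n f s : ℝ) (hM1 : 1 ≤ M) (hc1 : 1 ≤ c)
    (hn : 0 ≤ n) (hf : 0 ≤ f) (hs0 : 0 ≤ s)
    (hlo : (2 * c)⁻¹ * n ≤ f) (hup : f ≤ M * n) (hs : s ≤ Real.sqrt M * n) :
    ((M + Real.sqrt M + 1) * (2 * c + 1))⁻¹ * n ≤ f ∧
    f ≤ (M + Real.sqrt M + 1) * (2 * c + 1) * n ∧
    s ≤ (M + Real.sqrt M + 1) * (2 * c + 1) * n ∧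
    s ≤ (M + Real.sqrt M + 1) * (2 * c + 1) * f := by
  have hsqM : (1:ℝ) ≤ Real.sqrt M := by
    rw [show (1:ℝ) = Real.sqrt 1 by simp]; exact Real.sqrt_le_sqrt hM1
  set q := Real.sqrt M with hq
  set C := (M + q + 1) * (2 * c + 1) with hC
  have hc0 : (0:ℝ) < c := by linarith
  have h2c0 : (0:ℝ) < 2 * c := by linarith
  have hC0 : (0:ℝ) < C := by nlinarith
  have h2c : 2 * c ≤ C := by nlinarith
  have hn2c : n ≤ 2 * c * f := by
    rw [← inv_mul_le_iff₀ h2c0]; exact hlo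
  refine ⟨?_, ?_, ?_, ?_⟩
  · have hCinv : C⁻¹ ≤ (2 * c)⁻¹ := by
      apply inv_anti₀ h2c0 h2c
    calc C⁻¹ * n ≤ (2 * c)⁻¹ * n := by
          apply mul_le_mul_of_nonneg_right hCinv hn
      _ ≤ f := hlo
  · nlinarith
  · nlinarith
  · calc s ≤ q * n := hs
      _ ≤ q * (2 * c * f) := by nlinarith
      _ ≤ C * f := by nlinarith

set_option maxHeartbeats 1000000 in
/-- The smooth case: if `E` is `C²` on an open set `U` of a Banach
space, `φ ∈ U` is a local minimum and `E''(φ)` is invertible, then near `φ` the norm of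
`E'(v)` is comparable to `‖v − φ‖` and the Łojasiewicz–Simon inequality with exponent
`1/2` holds: `(E v − E φ)^{1/2} ≤ C ‖E'(v)‖`. -/
theorem stmt17 {X : Type*} [NormedAddCommGroup X] [NormedSpace ℝ X] [CompleteSpace X]
    (U : Set X) (hU : IsOpen U) (E : X → ℝ) (hE : ContDiffOn ℝ 2 E U)
    (φ : X) (hφU : φ ∈ U)
    (r₀ : ℝ) (hr₀ : 0 < r₀) (hball : Metric.ball φ r₀ ⊆ U)
    (hmin : ∀ w ∈ Metric.ball φ r₀, E φ ≤ E w)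
    (hinv : ∃ e : X ≃L[ℝ] (X →L[ℝ] ℝ), ⇑e = ⇑(fderiv ℝ (fderiv ℝ E) φ)) :
    ∃ δ > (0:ℝ), ∃ C > (0:ℝ), Metric.ball φ δ ⊆ U ∧
      ∀ w ∈ Metric.ball φ δ,
        C⁻¹ * ‖w - φ‖ ≤ ‖fderiv ℝ E w‖ ∧
        ‖fderiv ℝ E w‖ ≤ C * ‖w - φ‖ ∧
        Real.sqrt (E w - E φ) ≤ C * ‖w - φ‖ ∧
        Real.sqrt (E w - E φ) ≤ C * ‖fderiv ℝ E w‖ := by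
  classical
  obtain ⟨e, he⟩ := hinv
  have hlocmin : IsLocalMin E φ :=
    Filter.eventually_iff_exists_mem.mpr ⟨Metric.ball φ r₀, Metric.ball_mem_nhds φ hr₀, hmin⟩
  have hf0 : fderiv ℝ E φ = 0 := hlocmin.fderiv_eq_zero
  have hEc2 : ContDiffAt ℝ 2 E φ := hE.contDiffAt (hU.mem_nhds hφU)
  set A := fderiv ℝ (fderiv ℝ E) φ with hAdef
  have hfd : HasFDerivAt (fderiv ℝ E) A φ := by
    have h1 : ContDiffAt ℝ 1 (fderiv ℝ E) φ :=
      hEc2.fderiv_right (by norm_num)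
    exact (h1.differentiableAt (by norm_num)).hasFDerivAt
  set c : ℝ := ‖(e.symm : (X →L[ℝ] ℝ) →L[ℝ] X)‖ + 1 with hcdef
  have hc1 : (1:ℝ) ≤ c := by
    have h : (0:ℝ) ≤ ‖((e.symm : (X →L[ℝ] ℝ) →L[ℝ] X))‖ :=
      ContinuousLinearMap.opNorm_nonneg _
    linarith
  have hc0 : (0:ℝ) < c := lt_of_lt_of_le one_pos hc1
  have hlow : ∀ x : X, ‖x‖ ≤ c * ‖A x‖ := by
    intro x
    have h1 : e.symm (e x) = x := e.symm_apply_apply x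
    have h2 : ‖x‖ ≤ ‖(e.symm : (X →L[ℝ] ℝ) →L[ℝ] X)‖ * ‖e x‖ := by
      conv_lhs => rw [← h1]
      exact (e.symm : (X →L[ℝ] ℝ) →L[ℝ] X).le_opNorm (e x)
    have h3 : e x = A x := congrFun he x
    rw [h3] at h2
    nlinarith [norm_nonneg (A x)]
  have hε : (0:ℝ) < (2 * c)⁻¹ := by positivity
  have hsmall : ∀ᶠ w in 𝓝 φ,
      ‖fderiv ℝ E w - fderiv ℝ E φ - A (w - φ)‖ ≤ (2 * c)⁻¹ * ‖w - φ‖ :=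
    hfd.isLittleO.def hε
  rw [Metric.eventually_nhds_iff_ball] at hsmall
  obtain ⟨δ₁, hδ₁, hsm⟩ := hsmall
  set δ := min δ₁ r₀ with hδdef
  have hδ0 : 0 < δ := lt_min hδ₁ hr₀
  have hδball : Metric.ball φ δ ⊆ Metric.ball φ r₀ :=
    Metric.ball_subset_ball (min_le_right _ _)
  have hδU : Metric.ball φ δ ⊆ U := hδball.trans hball
  set M : ℝ := ‖A‖ + 1 with hMdef
  have hM1 : (1:ℝ) ≤ M := by
    have h : (0:ℝ) ≤ ‖A‖ := ContinuousLinearMap.opNorm_nonneg _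
    linarith
  have hM0 : (0:ℝ) < M := lt_of_lt_of_le one_pos hM1
  -- upper and lower bounds for ‖fderiv E‖ on the ball
  have key : ∀ w ∈ Metric.ball φ δ,
      (2 * c)⁻¹ * ‖w - φ‖ ≤ ‖fderiv ℝ E w‖ ∧ ‖fderiv ℝ E w‖ ≤ M * ‖w - φ‖ := by
    intro w hw
    have hw1 : w ∈ Metric.ball φ δ₁ :=
      Metric.ball_subset_ball (min_le_left _ _) hw
    have hsm' := hsm w hw1
    rw [hf0] at hsm'
    simp only [sub_zero] at hsm'
    have hAle : ‖A (w - φ)‖ ≤ ‖A‖ * ‖w - φ‖ := A.le_opNorm _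
    have hAge : ‖w - φ‖ ≤ c * ‖A (w - φ)‖ := hlow _
    have htri1 : ‖fderiv ℝ E w‖ ≤ ‖fderiv ℝ E w - A (w - φ)‖ + ‖A (w - φ)‖ := by
      have := norm_add_le (fderiv ℝ E w - A (w - φ)) (A (w - φ))
      simpa using this
    have htri2 : ‖A (w - φ)‖ - ‖fderiv ℝ E w - A (w - φ)‖ ≤ ‖fderiv ℝ E w‖ := by
      have := norm_sub_norm_le (A (w - φ)) (A (w - φ) - fderiv ℝ E w)
      rw [norm_sub_rev] at this
      simpa using this
    have hεle : (2 * c)⁻¹ * ‖w - φ‖ ≤ ‖w - φ‖ := by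
      have : (2 * c)⁻¹ ≤ 1 := by
        rw [inv_le_one_iff₀]; right; nlinarith
      nlinarith [norm_nonneg (w - φ)]
    constructor
    · have h1 : c⁻¹ * ‖w - φ‖ ≤ ‖A (w - φ)‖ := by
        rw [inv_mul_le_iff₀ hc0]; linarith
      have h2 : c⁻¹ * ‖w - φ‖ - (2 * c)⁻¹ * ‖w - φ‖ = (2 * c)⁻¹ * ‖w - φ‖ := by
        field_simp; ring
      linarith
    · nlinarith [norm_nonneg (w - φ)]
  -- quadratic bound on the energy
  have hquad : ∀ w ∈ Metric.ball φ δ, E w - E φ ≤ M * ‖w - φ‖ ^ 2 := by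
    intro w hw
    have hsub : Metric.closedBall φ ‖w - φ‖ ⊆ Metric.ball φ δ := by
      apply Metric.closedBall_subset_ball
      rw [← dist_eq_norm]; exact Metric.mem_ball.mp hw
    have hmvt : ‖E w - E φ‖ ≤ (M * ‖w - φ‖) * ‖w - φ‖ := by
      have := Convex.norm_image_sub_le_of_norm_fderiv_le
        (f := E) (s := Metric.closedBall φ ‖w - φ‖) (C := M * ‖w - φ‖)
        (fun u hu => (hE.contDiffAt (hU.mem_nhds (hδU (hsub hu)))).differentiableAt
          (by norm_num))
        (fun u hu => by
          have h1 := (key u (hsub hu)).2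
          have h2 : ‖u - φ‖ ≤ ‖w - φ‖ := by
            rw [← dist_eq_norm]; exact Metric.mem_closedBall.mp hu
          nlinarith)
        (convex_closedBall _ _)
        (Metric.mem_closedBall_self (norm_nonneg _))
        (by rw [Metric.mem_closedBall, dist_eq_norm])
      exact this
    have habs : E w - E φ ≤ ‖E w - E φ‖ := Real.le_norm_self _
    have h3 : (M * ‖w - φ‖) * ‖w - φ‖ = M * ‖w - φ‖ ^ 2 := by ring
    linarith
  -- conclusion
  refine ⟨δ, hδ0, (M + Real.sqrt M + 1) * (2 * c + 1), by positivity, hδU, ?_⟩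
  intro w hw
  obtain ⟨hlo, hup⟩ := key w hw
  have hnw : (0:ℝ) ≤ ‖w - φ‖ := norm_nonneg _
  have hnf : (0:ℝ) ≤ ‖fderiv ℝ E w‖ := norm_nonneg _
  have hsqrt : Real.sqrt (E w - E φ) ≤ Real.sqrt M * ‖w - φ‖ := by
    have h1 : Real.sqrt (E w - E φ) ≤ Real.sqrt (M * ‖w - φ‖ ^ 2) :=
      Real.sqrt_le_sqrt (hquad w hw)
    have h2 : Real.sqrt (M * ‖w - φ‖ ^ 2) = Real.sqrt M * ‖w - φ‖ := by
      rw [Real.sqrt_mul (le_of_lt hM0), Real.sqrt_sq hnw]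
    rw [h2] at h1; exact h1
  exact stmt17_aux M c ‖w - φ‖ ‖fderiv ℝ E w‖ (Real.sqrt (E w - E φ))
    hM1 hc1 hnw hnf (Real.sqrt_nonneg _) hlo hup hsqrt
end
end
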